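/- arXiv:1209.3933 — 8 statements merged into one kernel-verified Lean document; each statement's English description precedes it below -/
import Mathlib

section
/- Assume κ^{<κ} = κ. The collection Borel(κ), defined as the closure of the basic open sets of κ^κ under unions and intersections of size ≤ κ, is closed under complements. -/
open Cardinal Ordinal Set Topology
noncomputable section

/-- The generalized Baire space `κ^κ`, realized on the canonical type of order type `κ.ord`. -/
abbrev GBS (κ : Cardinal) : Type := κ.ord.ToType → κ.ord.ToType

/-- Basic open sets `N_η = {f | η ⊆ f}`, for `η` a function defined on an initial
segment `{i | i < b}` (these are exactly the ordinals `α < κ`). -/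
def GBaireBasic (κ : Cardinal) : Set (Set (GBS κ)) :=
  {N | ∃ (b : κ.ord.ToType) (η : κ.ord.ToType → κ.ord.ToType),
        N = {f : GBS κ | ∀ i, i < b → f i = η i}}

/-- The bounded topology on the generalized Baire space. -/
def gbTop (κ : Cardinal) : TopologicalSpace (GBS κ) :=
  TopologicalSpace.generateFrom (GBaireBasic κ)

/-- `Borel(κ)`: the closure of the basic open sets under unions and
intersections of size `≤ κ`. -/
inductive GBBorel (κ : Cardinal) : Set (GBS κ) → Prop
  | basic : ∀ N ∈ GBaireBasic κ, GBBorel κ N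
  | iUnion : ∀ (ι : Type) (A : ι → Set (GBS κ)), Cardinal.mk ι ≤ κ →
      (∀ i, GBBorel κ (A i)) → GBBorel κ (⋃ i, A i)
  | iInter : ∀ (ι : Type) (A : ι → Set (GBS κ)), Cardinal.mk ι ≤ κ →
      (∀ i, GBBorel κ (A i)) → GBBorel κ (⋂ i, A i)

/-- `Borel(κ)` is closed under complements. -/
theorem stmt_2 (κ : Cardinal) (hκ : ℵ₀ ≤ κ) (h : κ ^< κ = κ) :
    ∀ A : Set (GBS κ), GBBorel κ A → GBBorel κ Aᶜ := by
  intro A hA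
  induction hA with
  | basic N hN =>
    obtain ⟨b, η, rfl⟩ := hN
    -- index: functions on the initial segment below b which disagree with η somewhere
    set ι : Type := {η' : {i : κ.ord.ToType // i < b} → κ.ord.ToType //
        ∃ i : {i : κ.ord.ToType // i < b}, η' i ≠ η i} with hι
    have hne : Nonempty κ.ord.ToType := by
      rw [Ordinal.toType_nonempty_iff_ne_zero]
      rw [ne_eq, Cardinal.ord_eq_zero]
      exact (Cardinal.aleph0_pos.trans_le hκ).ne'
    obtain ⟨d⟩ := hne
    set ext : ι → GBS κ := fun η' i => if hi : i < b then η'.1 ⟨i, hi⟩ else d with hext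
    have key : {f : GBS κ | ∀ i, i < b → f i = η i}ᶜ
        = ⋃ η' : ι, {f : GBS κ | ∀ i, i < b → f i = ext η' i} := by
      ext f
      simp only [mem_compl_iff, mem_setOf_eq, mem_iUnion, not_forall]
      constructor
      · rintro ⟨i, hi, hne⟩
        refine ⟨⟨fun j => f j, ⟨⟨i, hi⟩, hne⟩⟩, ?_⟩
        intro j hj
        simp [hext, hj]
      · rintro ⟨⟨η', ⟨i, hni⟩⟩, hf⟩
        refine ⟨i, i.2, ?_⟩
        rw [hf i i.2]
        simpa [hext, i.2] using hni
    rw [key]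
    apply GBBorel.iUnion
    · calc Cardinal.mk ι ≤ Cardinal.mk ({i : κ.ord.ToType // i < b} → κ.ord.ToType) :=
            Cardinal.mk_subtype_le _
        _ = κ ^ Cardinal.mk {i : κ.ord.ToType // i < b} := by
            rw [Cardinal.mk_arrow, Cardinal.mk_ord_toType, Cardinal.lift_id, Cardinal.lift_id]
        _ ≤ κ ^< κ := Cardinal.le_powerlt κ (Cardinal.mk_Iio_ord_toType b)
        _ = κ := h
    · intro η'
      exact GBBorel.basic _ ⟨b, ext η', rfl⟩
  | iUnion ι' A' hcard _ ih =>
    rw [Set.compl_iUnion]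
    exact GBBorel.iInter ι' _ hcard ih
  | iInter ι' A' hcard _ ih =>
    rw [Set.compl_iInter]
    exact GBBorel.iUnion ι' _ hcard ih
end
end

section
/- Assume κ^{<κ} = κ. Every Borel(κ) subset of κ^κ is Δ¹₁(κ); that is, both it and its complement are projections of closed subsets of κ^κ × κ^κ. -/
open Cardinal Ordinal Set Topology
noncomputable section

/-- `Σ¹₁(κ)`: projections of closed subsets of `κ^κ × κ^κ`. -/
def IsSigma11 (κ : Cardinal) (X : Set (GBS κ)) : Prop :=
  letI := gbTop κ
  ∃ C : Set (GBS κ × GBS κ), IsClosed C ∧ X = Prod.fst '' C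

/-! ### Auxiliary lemmas -/

instance gbs_nonempty (κ : Cardinal) : Nonempty (GBS κ) := ⟨fun x => x⟩

instance gb_wo (o : Ordinal) : IsWellOrder o.ToType (· < ·) := isWellOrder_lt

section Aux

variable {κ : Cardinal.{0}}

/-- Any `<κ`-indexed family into `κ` is bounded, by regularity. -/
lemma gb_bdd (hκ : ℵ₀ ≤ κ) (hreg : κ ≤ κ.ord.cof)
    (b : κ.ord.ToType) (m : κ.ord.ToType → κ.ord.ToType) :
    ∃ β : κ.ord.ToType, ∀ j, j < b → m j < β := by
  have hlim : Order.IsSuccLimit κ.ord := Cardinal.isSuccLimit_ord hκ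
  have hcard : #(Set.Iio b) < κ.ord.cof :=
    lt_of_lt_of_le (Cardinal.mk_Iio_ord_toType b) hreg
  set F : (Set.Iio b) → Ordinal :=
    fun j => Ordinal.typein (α := κ.ord.ToType) (· < ·) (m j.1) with hF
  have hsup : iSup F < κ.ord :=
    Ordinal.iSup_lt_ord hcard (fun j => Ordinal.typein_lt_self _)
  set s : Ordinal := iSup F with hs
  have hsucc : Order.succ s < κ.ord := hlim.succ_lt hsup
  refine ⟨Ordinal.enum (α := κ.ord.ToType) (· < ·)
    ⟨Order.succ s, by rwa [Ordinal.type_toType]⟩, ?_⟩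
  intro j hj
  have h1 : Ordinal.typein (α := κ.ord.ToType) (· < ·) (m j) ≤ s :=
    le_ciSup (f := F) (Ordinal.bddAbove_range _) ⟨j, hj⟩
  have h2 := Ordinal.typein_enum (α := κ.ord.ToType) (· < ·)
    (o := Order.succ s) (by rwa [Ordinal.type_toType])
  rw [← Ordinal.typein_lt_typein (α := κ.ord.ToType) (· < ·), h2]
  exact lt_of_le_of_lt h1 (Order.lt_succ _)

/-- A set all of whose members have a basic neighborhood inside it is open. -/
lemma gb_isOpen_of {S : Set (GBS κ)}
    (h : ∀ g ∈ S, ∃ b : κ.ord.ToType, {g' : GBS κ | ∀ i, i < b → g' i = g i} ⊆ S) :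
    IsOpen[gbTop κ] S := by
  letI := gbTop κ
  rw [isOpen_iff_forall_mem_open]
  intro g hg
  obtain ⟨b, hb⟩ := h g hg
  exact ⟨_, hb, TopologicalSpace.isOpen_generateFrom_of_mem ⟨b, g, rfl⟩, fun i _ => rfl⟩

lemma gb_isOpen_basic {N : Set (GBS κ)} (hN : N ∈ GBaireBasic κ) : IsOpen[gbTop κ] N :=
  TopologicalSpace.isOpen_generateFrom_of_mem hN

lemma gb_isOpen_eval (hκ : ℵ₀ ≤ κ) (x ξ : κ.ord.ToType) :
    IsOpen[gbTop κ] {g : GBS κ | g x = ξ} := by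
  haveI := Cardinal.noMaxOrder hκ
  apply gb_isOpen_of
  intro g hg
  obtain ⟨β, hβ⟩ := exists_gt x
  exact ⟨β, fun g' hg' => (hg' x hβ).trans hg⟩

lemma gb_isClosed_basic (hκ : ℵ₀ ≤ κ) {N : Set (GBS κ)} (hN : N ∈ GBaireBasic κ) :
    IsClosed[gbTop κ] N := by
  letI := gbTop κ
  obtain ⟨b, η, rfl⟩ := hN
  rw [← isOpen_compl_iff]
  apply gb_isOpen_of
  intro g hg
  have hg' : ∃ i, i < b ∧ g i ≠ η i := by
    by_contra hcon
    push_neg at hcon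
    exact hg fun i hi => hcon i hi
  obtain ⟨i, hib, hne⟩ := hg'
  haveI := Cardinal.noMaxOrder hκ
  obtain ⟨β, hβ⟩ := exists_gt i
  refine ⟨β, fun g' hg' h' => ?_⟩
  exact hne (by rw [← hg' i hβ]; exact h' i hib)

/-- Reindexing maps are continuous. -/
lemma gb_continuous_reindex (hκ : ℵ₀ ≤ κ) (hreg : κ ≤ κ.ord.cof)
    (m : κ.ord.ToType → κ.ord.ToType) :
    Continuous[gbTop κ, gbTop κ] (fun g : GBS κ => g ∘ m) := by
  letI := gbTop κ
  refine continuous_generateFrom_iff.mpr ?_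
  rintro N ⟨b, η, rfl⟩
  apply gb_isOpen_of
  intro g hg
  obtain ⟨β, hβ⟩ := gb_bdd hκ hreg b m
  refine ⟨β, fun g' hg' i hi => ?_⟩
  have h1 : g' (m i) = g (m i) := hg' (m i) (hβ i hi)
  have h2 : g (m i) = η i := hg i hi
  exact h1.trans h2

lemma sigma11_of_closed {X : Set (GBS κ)} (hX : IsClosed[gbTop κ] X) : IsSigma11 κ X := by
  letI := gbTop κ
  exact ⟨X ×ˢ (Set.univ : Set (GBS κ)), hX.prod isClosed_univ,
    (Set.fst_image_prod X Set.univ_nonempty).symm⟩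

open scoped Classical in
/-- A retraction for an embedding. -/
def gbRetract {ι : Type} [Nonempty ι] (e : ι ↪ κ.ord.ToType) : κ.ord.ToType → ι :=
  fun x => if h : ∃ i, e i = x then h.choose else Classical.arbitrary ι

lemma gbRetract_apply {ι : Type} [Nonempty ι] (e : ι ↪ κ.ord.ToType) (i : ι) :
    gbRetract e (e i) = i := by
  have h : ∃ j, e j = e i := ⟨i, rfl⟩
  simp only [gbRetract, dif_pos h]
  exact e.injective h.choose_spec

lemma gb_embedding (hκ : ℵ₀ ≤ κ) {ι : Type} (hι : #ι ≤ κ) :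
    Nonempty (ι ↪ κ.ord.ToType) :=
  Cardinal.le_def ι κ.ord.ToType |>.mp (by rwa [Cardinal.mk_ord_toType])

lemma gb_pairing (hκ : ℵ₀ ≤ κ) :
    Nonempty (κ.ord.ToType × κ.ord.ToType ≃ κ.ord.ToType) := by
  apply Cardinal.eq.mp
  rw [Cardinal.mk_prod, Cardinal.lift_id, Cardinal.mk_ord_toType]
  exact Cardinal.mul_eq_self hκ

lemma gb_nonempty_toType (hκ : ℵ₀ ≤ κ) : Nonempty κ.ord.ToType :=
  Ordinal.toType_nonempty_iff_ne_zero.mpr (Cardinal.isSuccLimit_ord hκ).pos.ne'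

/-- Σ¹₁ is closed under unions of size ≤ κ. -/
lemma sigma11_iUnion (hκ : ℵ₀ ≤ κ) (hreg : κ ≤ κ.ord.cof) (ι : Type)
    (A : ι → Set (GBS κ)) (hι : #ι ≤ κ) (hA : ∀ i, IsSigma11 κ (A i)) :
    IsSigma11 κ (⋃ i, A i) := by
  letI := gbTop κ
  rcases isEmpty_or_nonempty ι with hE | hN
  · exact ⟨∅, isClosed_empty, by simp⟩
  choose D hDc hDe using hA
  obtain ⟨e⟩ := gb_embedding hκ hι
  obtain ⟨P⟩ := gb_pairing hκ
  haveI := gb_nonempty_toType hκ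
  haveI := Cardinal.noMaxOrder hκ
  set t₀ : κ.ord.ToType := Classical.arbitrary _ with ht₀
  obtain ⟨t₁, ht₁⟩ := exists_gt t₀
  set x₀ : κ.ord.ToType := P (t₀, t₀) with hx₀
  set m : κ.ord.ToType → κ.ord.ToType := fun j => P (t₁, j) with hm
  set sl : GBS κ → GBS κ := fun g => g ∘ m with hsl
  set p : κ.ord.ToType → ι := gbRetract e with hp
  set C : Set (GBS κ × GBS κ) :=
    {fg | fg.2 x₀ ∈ Set.range ⇑e ∧ (fg.1, sl fg.2) ∈ D (p (fg.2 x₀))} with hC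
  have hmx₀ : ∀ j, m j ≠ x₀ := by
    intro j hj
    have := P.injective hj
    exact absurd (congrArg Prod.fst this) (ne_of_gt ht₁)
  have hslcont : Continuous (fun fg : GBS κ × GBS κ => (fg.1, sl fg.2)) :=
    continuous_fst.prodMk ((gb_continuous_reindex hκ hreg m).comp continuous_snd)
  refine ⟨C, ?_, ?_⟩
  · rw [← isOpen_compl_iff, isOpen_iff_forall_mem_open]
    rintro ⟨f, g⟩ hfg
    by_cases hr : g x₀ ∈ Set.range ⇑e
    · have hD : (f, sl g) ∉ D (p (g x₀)) := fun hmem => hfg ⟨hr, hmem⟩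
      refine ⟨((fun fg : GBS κ × GBS κ => (fg.1, sl fg.2)) ⁻¹' (D (p (g x₀)))ᶜ) ∩
        ((Set.univ : Set (GBS κ)) ×ˢ {g' : GBS κ | g' x₀ = g x₀}), ?_, ?_, hD, trivial, rfl⟩
      · rintro ⟨f', g'⟩ ⟨h1, -, h2⟩ hCmem
        have h2' : g' x₀ = g x₀ := h2
        have h3 : (f', sl g') ∈ D (p (g' x₀)) := hCmem.2
        have h1' : (f', sl g') ∉ D (p (g x₀)) := h1
        rw [h2'] at h3
        exact h1' h3
      · exact (((hDc _).isOpen_compl).preimage hslcont).inter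
          (isOpen_univ.prod (gb_isOpen_eval hκ x₀ (g x₀)))
    · refine ⟨(Set.univ : Set (GBS κ)) ×ˢ {g' : GBS κ | g' x₀ = g x₀}, ?_, ?_, trivial, rfl⟩
      · rintro ⟨f', g'⟩ ⟨-, h2⟩ hCmem
        have h2' : g' x₀ = g x₀ := h2
        have h3 : g' x₀ ∈ Set.range ⇑e := hCmem.1
        rw [h2'] at h3
        exact hr h3
      · exact isOpen_univ.prod (gb_isOpen_eval hκ x₀ (g x₀))
  · ext f
    simp only [Set.mem_iUnion, Set.mem_image]
    constructor
    · rintro ⟨i, hfi⟩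
      rw [hDe i] at hfi
      obtain ⟨fg, hmem, hfst⟩ := hfi
      set w : GBS κ := fg.2 with hw
      set g : GBS κ := fun x => if x = x₀ then e i else w ((P.symm x).2) with hg
      have hgx₀ : g x₀ = e i := if_pos rfl
      have hslg : sl g = w := by
        funext j
        have h1 : m j ≠ x₀ := hmx₀ j
        show g (m j) = w j
        rw [hg]
        simp only [h1, if_false, hm]
        rw [P.symm_apply_apply]
        exact if_neg h1
      refine ⟨(f, g), ⟨?_, ?_⟩, rfl⟩
      · show g x₀ ∈ Set.range ⇑e
        rw [hgx₀]; exact ⟨i, rfl⟩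
      · show (f, sl g) ∈ D (p (g x₀))
        rw [hslg, hgx₀, hp, gbRetract_apply]
        rw [← hfst]
        simpa using hmem
    · rintro ⟨fg, hmem, rfl⟩
      exact ⟨p (fg.2 x₀), by rw [hDe]; exact ⟨(fg.1, sl fg.2), hmem.2, rfl⟩⟩

/-- Σ¹₁ is closed under intersections of size ≤ κ. -/
lemma sigma11_iInter (hκ : ℵ₀ ≤ κ) (hreg : κ ≤ κ.ord.cof) (ι : Type)
    (A : ι → Set (GBS κ)) (hι : #ι ≤ κ) (hA : ∀ i, IsSigma11 κ (A i)) :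
    IsSigma11 κ (⋂ i, A i) := by
  letI := gbTop κ
  rcases isEmpty_or_nonempty ι with hE | hN
  · rw [Set.iInter_of_empty]
    exact ⟨Set.univ, isClosed_univ,
      (Set.image_univ.trans Prod.fst_surjective.range_eq).symm⟩
  choose D hDc hDe using hA
  obtain ⟨e⟩ := gb_embedding hκ hι
  obtain ⟨P⟩ := gb_pairing hκ
  set p : κ.ord.ToType → ι := gbRetract e with hp
  set sl : κ.ord.ToType → GBS κ → GBS κ := fun a g => g ∘ (fun j => P (a, j)) with hsl
  set C : Set (GBS κ × GBS κ) :=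
    ⋂ a : κ.ord.ToType, {fg | (fg.1, sl a fg.2) ∈ D (p a)} with hC
  refine ⟨C, ?_, ?_⟩
  · refine isClosed_iInter fun a => ?_
    have hcont : Continuous (fun fg : GBS κ × GBS κ => (fg.1, sl a fg.2)) :=
      continuous_fst.prodMk
        ((gb_continuous_reindex hκ hreg (fun j => P (a, j))).comp continuous_snd)
    exact (hDc (p a)).preimage hcont
  · ext f
    simp only [Set.mem_iInter, Set.mem_image]
    constructor
    · intro hf
      have hw : ∀ i, ∃ g : GBS κ, (f, g) ∈ D i := by
        intro i
        have h1 : f ∈ Prod.fst '' D i := by rw [← hDe]; exact hf i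
        obtain ⟨fg, h2, h3⟩ := h1
        exact ⟨fg.2, by rw [← h3]; simpa using h2⟩
      choose w hwmem using hw
      set g : GBS κ := fun x => w (p (P.symm x).1) ((P.symm x).2) with hg
      refine ⟨(f, g), ?_, rfl⟩
      rw [hC]
      rw [Set.mem_iInter]
      intro a
      have hslg : sl a g = w (p a) := by
        funext j
        show g (P (a, j)) = w (p a) j
        rw [hg]
        simp only [P.symm_apply_apply]
      show (f, sl a g) ∈ D (p a)
      rw [hslg]
      exact hwmem (p a)
    · rintro ⟨fg, hmem, rfl⟩ i
      rw [hC, Set.mem_iInter] at hmem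
      have h1 := hmem (e i)
      rw [hp, gbRetract_apply] at h1
      rw [hDe]
      exact ⟨(fg.1, sl (e i) fg.2), h1, rfl⟩

end Aux

/-- Every `Borel(κ)` set is `Δ¹₁(κ)`: both it and its complement are
projections of closed subsets of `κ^κ × κ^κ`. -/
theorem stmt_6 (κ : Cardinal) (hκ : ℵ₀ ≤ κ) (h : κ ^< κ = κ)
    (X : Set (GBS κ)) (hX : GBBorel κ X) :
    IsSigma11 κ X ∧ IsSigma11 κ Xᶜ := by
  have hreg : κ ≤ κ.ord.cof := by
    by_contra hlt
    push_neg at hlt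
    have h1 : κ < κ ^ κ.ord.cof := Cardinal.lt_power_cof hκ
    have h2 : κ ^ κ.ord.cof ≤ κ ^< κ := Cardinal.le_powerlt κ hlt
    rw [h] at h2
    exact absurd (h1.trans_le h2) (lt_irrefl _)
  induction hX with
  | basic N hN =>
      refine ⟨sigma11_of_closed (gb_isClosed_basic hκ hN), sigma11_of_closed ?_⟩
      letI := gbTop κ
      exact (gb_isOpen_basic hN).isClosed_compl
  | iUnion ι A hι _ IH =>
      refine ⟨sigma11_iUnion hκ hreg ι A hι (fun i => (IH i).1), ?_⟩
      rw [Set.compl_iUnion]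
      exact sigma11_iInter hκ hreg ι _ hι (fun i => (IH i).2)
  | iInter ι A hι _ IH =>
      refine ⟨sigma11_iInter hκ hreg ι A hι (fun i => (IH i).1), ?_⟩
      rw [Set.compl_iInter]
      exact sigma11_iUnion hκ hreg ι _ hι (fun i => (IH i).2)
end
end

section
/- For trees T₀, T₁, write T₀ ≤ T₁ if there is an order-preserving map g : T₀ → T₁ (not necessarily injective). Then T₀ ≤ T₁ if and only if player II has a winning strategy in the game O(T₀, T₁), in which at each move α player I chooses t_α ∈ T₀, player II responds with u_α ∈ T₁, and the requirement is that for all α < β, t_α < t_β and u_α < u_β and (appropriately) the moves remain order-compatible; the first player to break the rules loses. -/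
open Cardinal Ordinal Set
noncomputable section

/-- A strategy of player II in the game `O(T₀, T₁)`: II's move at stage `α`
depends only on I's moves `t β` for `β ≤ α`. -/
structure GameOStrategy (T₀ T₁ : Type) [PartialOrder T₀] [PartialOrder T₁] where
  move : Ordinal → (Ordinal → T₀) → T₁
  consistent : ∀ (α : Ordinal) (t t' : Ordinal → T₀),
    (∀ β ≤ α, t β = t' β) → move α t = move α t'

/-- `s` is a winning strategy for II in `O(T₀, T₁)`: against any sequence of
moves of I that is strictly increasing up to stage `γ` (I follows the rules),
II's responses are strictly increasing up to stage `γ` (II never breaks the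
rules first). -/
def GameOWinning {T₀ T₁ : Type} [PartialOrder T₀] [PartialOrder T₁]
    (s : GameOStrategy T₀ T₁) : Prop :=
  ∀ (t : Ordinal → T₀) (γ : Ordinal),
    (∀ α β, α < β → β ≤ γ → t α < t β) →
    ∀ α β, α < β → β ≤ γ → s.move α t < s.move β t

universe u

/-- The strict order on the set of predecessors of `x`, lifted to universe `u`. -/
private def treeRel {T : Type} [PartialOrder T] (x : T) :
    ULift.{u} ↥(Set.Iio x) → ULift.{u} ↥(Set.Iio x) → Prop :=
  fun a b => (a.down : T) < (b.down : T)

private theorem treeRel_wo {T : Type} [PartialOrder T] (hwf : WellFoundedLT T)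
    (hlin : ∀ x : T, IsChain (· ≤ ·) (Set.Iio x)) (x : T) :
    IsWellOrder (ULift.{u} ↥(Set.Iio x)) (treeRel.{u} x) where
  trichotomous a b := by
    suffices H : treeRel x a b ∨ a = b ∨ treeRel x b a by
      intro h1 h2; rcases H with H | H | H <;> tauto
    rcases eq_or_ne a b with h | h
    · exact Or.inr (Or.inl h)
    · have hne : a.down ≠ b.down := fun e => h (congrArg ULift.up e)
      rcases hlin x a.down.2 b.down.2 (fun e => hne (Subtype.ext e)) with h' | h'
      · exact Or.inl (lt_of_le_of_ne h' (fun e => hne (Subtype.ext e)))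
      · exact Or.inr (Or.inr (lt_of_le_of_ne h' (fun e => hne (Subtype.ext e.symm))))
  wf := InvImage.wf _ hwf.wf

variable {T : Type} [PartialOrder T] (hwf : WellFoundedLT T)
  (hlin : ∀ x : T, IsChain (· ≤ ·) (Set.Iio x))

/-- The order type of the set of predecessors of `x`. -/
private def oX (x : T) : Ordinal.{u} :=
  @Ordinal.type _ (treeRel.{u} x) (treeRel_wo hwf hlin x)

/-- The canonical play of player I leading to `x`: at stage `β < oX x` play the
`β`-th predecessor of `x`, and from stage `oX x` on play `x` itself. -/
private def tseq (x : T) (β : Ordinal.{u}) : T :=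
  letI := treeRel_wo hwf hlin x
  if h : β < oX hwf hlin x then ((Ordinal.enum (treeRel.{u} x) ⟨β, h⟩).down : T) else x

section
variable (x : T)

private theorem tseq_pos (β : Ordinal.{u}) (h : β < oX.{u} hwf hlin x) :
    letI := treeRel_wo hwf hlin x
    tseq hwf hlin x β = ((Ordinal.enum (treeRel.{u} x) ⟨β, h⟩).down : T) := by
  simp only [tseq, dif_pos h]

private theorem tseq_lt (β : Ordinal.{u}) (h : β < oX.{u} hwf hlin x) :
    tseq hwf hlin x β < x := by
  letI := treeRel_wo hwf hlin x
  rw [tseq_pos hwf hlin x β h]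
  exact (Ordinal.enum (treeRel.{u} x) ⟨β, h⟩).down.2

private theorem tseq_self : tseq.{u} hwf hlin x (oX.{u} hwf hlin x) = x := by
  simp only [tseq, dif_neg (lt_irrefl _)]

private theorem tseq_mono : ∀ α β, α < β → β ≤ oX.{u} hwf hlin x →
    tseq hwf hlin x α < tseq hwf hlin x β := by
  letI := treeRel_wo hwf hlin x
  intro α β hαβ hβ
  rcases hβ.lt_or_eq with hβ' | rfl
  · rw [tseq_pos hwf hlin x α (hαβ.trans hβ'), tseq_pos hwf hlin x β hβ']
    exact (Ordinal.enum_lt_enum (r := treeRel.{u} x)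
      (o₁ := ⟨α, hαβ.trans hβ'⟩) (o₂ := ⟨β, hβ'⟩)).2 (Subtype.mk_lt_mk.2 hαβ)
  · rw [tseq_self hwf hlin x]
    exact tseq_lt hwf hlin x α hαβ

end

private theorem tseq_seg {x y : T} (hxy : x < y) :
    oX.{u} hwf hlin x < oX.{u} hwf hlin y ∧
      ∀ β ≤ oX.{u} hwf hlin x, tseq hwf hlin x β = tseq hwf hlin y β := by
  letI := treeRel_wo.{u} hwf hlin x
  letI := treeRel_wo.{u} hwf hlin y
  let emb : treeRel.{u} x ↪r treeRel.{u} y :=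
    ⟨⟨fun z => ⟨⟨z.down.1, lt_trans z.down.2 hxy⟩⟩,
      fun a b h => by
        apply ULift.down_injective
        apply Subtype.ext
        exact congrArg (fun w => (ULift.down w).1) h⟩, Iff.rfl⟩
  have hrange : ∀ b, b ∈ Set.range emb ↔ treeRel.{u} y b ⟨⟨x, hxy⟩⟩ := by
    intro b
    constructor
    · rintro ⟨a, rfl⟩; exact a.down.2
    · intro h; exact ⟨⟨⟨b.down.1, h⟩⟩, rfl⟩
  let f : PrincipalSeg (treeRel.{u} x) (treeRel.{u} y) := ⟨emb, ⟨⟨x, hxy⟩⟩, hrange⟩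
  have hoxy : oX.{u} hwf hlin x < oX.{u} hwf hlin y := f.ordinal_type_lt
  have htop : Ordinal.typein (treeRel.{u} y) ⟨⟨x, hxy⟩⟩ = oX.{u} hwf hlin x :=
    Ordinal.typein_top f
  refine ⟨hoxy, fun β hβ => ?_⟩
  rcases hβ.lt_or_eq with hβ' | rfl
  · rw [tseq_pos hwf hlin x β hβ', tseq_pos hwf hlin y β (hβ'.trans hoxy)]
    have key : Ordinal.enum (treeRel.{u} y) ⟨β, hβ'.trans hoxy⟩ =
        (f : InitialSeg (treeRel.{u} x) (treeRel.{u} y)) (Ordinal.enum (treeRel.{u} x) ⟨β, hβ'⟩) := by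
      apply (Ordinal.typein (treeRel.{u} y)).injective
      rw [Ordinal.typein_enum, Ordinal.typein_apply]
      exact (Ordinal.typein_enum _ hβ').symm
    rw [key]
    rfl
  · rw [tseq_self hwf hlin x, tseq_pos hwf hlin y _ hoxy]
    have key : Ordinal.enum (treeRel.{u} y) ⟨oX.{u} hwf hlin x, hoxy⟩ =
        (⟨⟨x, hxy⟩⟩ : ULift.{u} ↥(Set.Iio y)) := by
      apply (Ordinal.typein (treeRel.{u} y)).injective
      rw [htop]
      exact Ordinal.typein_enum _ hoxy
    rw [key]

/-- For trees `T₀`, `T₁` (well-founded partial orders with linearly ordered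
sets of predecessors), there is an order-preserving map `g : T₀ → T₁` (not
necessarily injective) iff player II has a winning strategy in `O(T₀, T₁)`. -/
theorem stmt_10 (T₀ T₁ : Type) [PartialOrder T₀] [PartialOrder T₁]
    (hwf₀ : WellFoundedLT T₀) (hlin₀ : ∀ x : T₀, IsChain (· ≤ ·) (Set.Iio x))
    (hwf₁ : WellFoundedLT T₁) (hlin₁ : ∀ x : T₁, IsChain (· ≤ ·) (Set.Iio x)) :
    (∃ g : T₀ → T₁, ∀ x y : T₀, x < y → g x < g y) ↔
      ∃ s : GameOStrategy T₀ T₁, GameOWinning s := by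
  constructor
  · rintro ⟨g, hg⟩
    refine ⟨⟨fun α t => g (t α), fun α t t' h => by
      show g (t α) = g (t' α); rw [h α le_rfl]⟩, ?_⟩
    intro t γ ht α β hαβ hβγ
    exact hg _ _ (ht α β hαβ hβγ)
  · rintro ⟨s, hs⟩
    refine ⟨fun x => s.move (oX hwf₀ hlin₀ x) (tseq hwf₀ hlin₀ x), fun x y hxy => ?_⟩
    obtain ⟨hoxy, hagree⟩ := tseq_seg hwf₀ hlin₀ hxy
    have h1 : s.move (oX hwf₀ hlin₀ x) (tseq hwf₀ hlin₀ x) =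
        s.move (oX hwf₀ hlin₀ x) (tseq hwf₀ hlin₀ y) :=
      s.consistent _ _ _ (fun β hβ => hagree β hβ)
    show s.move (oX hwf₀ hlin₀ x) (tseq hwf₀ hlin₀ x) <
        s.move (oX hwf₀ hlin₀ y) (tseq hwf₀ hlin₀ y)
    rw [h1]
    exact hs (tseq hwf₀ hlin₀ y) (oX hwf₀ hlin₀ y) (tseq_mono hwf₀ hlin₀ y)
      (oX hwf₀ hlin₀ x) (oX hwf₀ hlin₀ y) hoxy le_rfl
end
end

section
/- Assume κ^{<κ} = κ with κ > ω. The set CUB_ω(κ) = {η ∈ κ^κ | {α < κ : η(α) > 0} contains an ω-cub set} does not have the property of Baire in κ^κ. -/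
open Cardinal Ordinal Set Topology
noncomputable section

/-- `X ⊆ κ` is ω-cub: unbounded and closed under suprema of ω-sequences from `X`. -/
def OmegaCub (κ : Cardinal) (X : Set κ.ord.ToType) : Prop :=
  (∀ a : κ.ord.ToType, ∃ x ∈ X, a < x) ∧
  (∀ f : ℕ → κ.ord.ToType, (∀ n, f n ∈ X) → ∀ y, IsLUB (Set.range f) y → y ∈ X)

/-- `CUB_ω(κ) = {η | {α | η α > 0} contains an ω-cub set}` (here `η α > 0`
means `η α` is not the least element). -/
def CUBomega (κ : Cardinal) : Set (GBS κ) :=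
  {η | ∃ X : Set κ.ord.ToType, OmegaCub κ X ∧ X ⊆ {a | ∃ y, y < η a}}

/-- `X` is co-meager: it contains an intersection of `κ` many dense open sets. -/
def GBComeager (κ : Cardinal) (X : Set (GBS κ)) : Prop :=
  ∃ D : κ.ord.ToType → Set (GBS κ),
    (∀ i, IsOpen[gbTop κ] (D i) ∧
      (∀ V : Set (GBS κ), IsOpen[gbTop κ] V → V.Nonempty → (V ∩ D i).Nonempty)) ∧
    (⋂ i, D i) ⊆ X

namespace S11

abbrev TT (κ : Cardinal) : Type := κ.ord.ToType

variable {κ : Cardinal}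

/-! ### Ordinal bookkeeping on `TT κ` -/

def iot (t : TT κ) : Ordinal := ((Ordinal.ToType.mk (o := κ.ord)).symm t).1

lemma iot_lt (t : TT κ) : iot t < κ.ord := ((Ordinal.ToType.mk (o := κ.ord)).symm t).2

lemma iot_le_iot {a b : TT κ} : iot a ≤ iot b ↔ a ≤ b := by
  rw [iot, iot, Subtype.coe_le_coe]
  exact (Ordinal.ToType.mk (o := κ.ord)).symm.le_iff_le

def ford (o : Ordinal) (ho : o < κ.ord) : TT κ := Ordinal.ToType.mk (o := κ.ord) ⟨o, ho⟩

lemma iot_ford (o : Ordinal) (ho : o < κ.ord) : iot (ford (κ := κ) o ho) = o :=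
  congrArg Subtype.val ((Ordinal.ToType.mk (o := κ.ord)).symm_apply_apply ⟨o, ho⟩)

lemma kreg (hκ : ℵ₀ < κ) (h : κ ^< κ = κ) : κ.IsRegular := by
  refine ⟨hκ.le, ?_⟩
  by_contra hlt
  push_neg at hlt
  have h1 : κ < κ ^ κ.ord.cof := Cardinal.lt_power_cof hκ.le
  have h2 : κ ^ κ.ord.cof ≤ κ ^< κ := le_powerlt κ hlt
  rw [h] at h2
  exact absurd (h1.trans_le h2) (lt_irrefl κ)

lemma neT (hκ : ℵ₀ < κ) : Nonempty (TT κ) :=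
  toType_nonempty_iff_ne_zero.2 (by
    rw [Ne, ord_eq_zero]
    rintro rfl
    exact absurd hκ (by simp))

lemma noMaxT (hκ : ℵ₀ < κ) : NoMaxOrder (TT κ) := Cardinal.noMaxOrder hκ.le

/-- next element -/
def nxt (hκ : ℵ₀ < κ) (i : TT κ) : TT κ := ((noMaxT hκ).exists_gt i).choose

lemma lt_nxt (hκ : ℵ₀ < κ) (i : TT κ) : i < nxt hκ i := ((noMaxT hκ).exists_gt i).choose_spec

/-! ### Suprema in `TT κ` -/

def supT (hreg : κ.IsRegular) {ι' : Type} (f : ι' → TT κ) (hι : #ι' < κ) (base : TT κ) : TT κ :=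
  ford (max (iot base) (⨆ i, iot (f i))) (by
    rcases isEmpty_or_nonempty ι' with hE | hN
    · rw [ciSup_of_empty]
      simpa using iot_lt base
    · exact max_lt (iot_lt _) (iSup_lt_ord_of_isRegular hreg hι fun i => iot_lt _))

lemma le_supT (hreg : κ.IsRegular) {ι' : Type} (f : ι' → TT κ) (hι : #ι' < κ) (base : TT κ)
    (i : ι') : f i ≤ supT hreg f hι base := by
  rw [← iot_le_iot, supT, iot_ford]
  exact le_max_of_le_right (Ordinal.le_iSup _ i)

lemma base_le_supT (hreg : κ.IsRegular) {ι' : Type} (f : ι' → TT κ) (hι : #ι' < κ)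
    (base : TT κ) : base ≤ supT hreg f hι base := by
  rw [← iot_le_iot, supT, iot_ford]
  exact le_max_left _ _

lemma supT_le (hreg : κ.IsRegular) {ι' : Type} (f : ι' → TT κ) (hι : #ι' < κ) (base : TT κ)
    {u : TT κ} (hb : base ≤ u) (hf : ∀ i, f i ≤ u) : supT hreg f hι base ≤ u := by
  rw [← iot_le_iot, supT, iot_ford]
  exact max_le (iot_le_iot.2 hb) (Ordinal.iSup_le fun i => iot_le_iot.2 (hf i))

lemma natlt (hκ : ℵ₀ < κ) : #ℕ < κ := by rw [Cardinal.mk_nat]; exact hκ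

/-- LUB of an ω-sequence. -/
lemma supTN_isLUB (hreg : κ.IsRegular) (hκ : ℵ₀ < κ) (g : ℕ → TT κ) :
    IsLUB (Set.range g) (supT hreg g (natlt hκ) (g 0)) := by
  constructor
  · rintro x ⟨n, rfl⟩
    exact le_supT hreg g (natlt hκ) (g 0) n
  · intro u hu
    exact supT_le hreg g (natlt hκ) (g 0) (hu ⟨0, rfl⟩) fun n => hu ⟨n, rfl⟩

/-- Any two ω-cub sets intersect. -/
lemma omegaCub_inter (hreg : κ.IsRegular) (hκ : ℵ₀ < κ) {X Y : Set (TT κ)}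
    (hX : OmegaCub κ X) (hY : OmegaCub κ Y) : (X ∩ Y).Nonempty := by
  have hne : Nonempty (TT κ) := neT hκ
  choose cx hcxX hcx using hX.1
  choose cy hcyY hcy using hY.1
  let a0 := Classical.arbitrary (TT κ)
  let f : ℕ → TT κ × TT κ :=
    fun n => Nat.rec (cx a0, cy (cx a0)) (fun _ p => (cx p.2, cy (cx p.2))) n
  set x : ℕ → TT κ := fun n => (f n).1 with hxdef
  set y : ℕ → TT κ := fun n => (f n).2 with hydef
  have hyx : ∀ n, y n = cy (x n) := by intro n; cases n <;> rfl
  have hxy : ∀ n, x (n + 1) = cx (y n) := fun n => rfl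
  have hxmem : ∀ n, x n ∈ X := by intro n; cases n <;> exact hcxX _
  have hymem : ∀ n, y n ∈ Y := by
    intro n; rw [hyx]; exact hcyY _
  have hlt1 : ∀ n, x n < y n := by intro n; rw [hyx]; exact hcy _
  have hlt2 : ∀ n, y n < x (n + 1) := by intro n; rw [hxy]; exact hcx _
  set s := supT hreg x (natlt hκ) (x 0) with hs
  have hsX : IsLUB (Set.range x) s := supTN_isLUB hreg hκ x
  have hsY : IsLUB (Set.range y) s := by
    constructor
    · rintro z ⟨n, rfl⟩
      exact le_trans (hlt2 n).le (hsX.1 ⟨n + 1, rfl⟩)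
    · intro u hu
      refine hsX.2 ?_
      rintro z ⟨n, rfl⟩
      exact le_trans (hlt1 n).le (hu ⟨n, rfl⟩)
  exact ⟨s, hX.2 x hxmem s hsX, hY.2 y hymem s hsY⟩

/-! ### Conditions and extension -/

def Ext (p q : TT κ × GBS κ) : Prop :=
  p.1 ≤ q.1 ∧ ∀ i, i < p.1 → q.2 i = p.2 i

lemma Ext.refl (p : TT κ × GBS κ) : Ext p p := ⟨le_rfl, fun _ _ => rfl⟩

lemma Ext.trans {p q r : TT κ × GBS κ} (h1 : Ext p q) (h2 : Ext q r) : Ext p r :=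
  ⟨h1.1.trans h2.1, fun i hi => (h2.2 i (lt_of_lt_of_le hi h1.1)).trans (h1.2 i hi)⟩

lemma basic_open (b : TT κ) (g : GBS κ) :
    IsOpen[gbTop κ] {f : GBS κ | ∀ i, i < b → f i = g i} :=
  TopologicalSpace.GenerateOpen.basic _ ⟨b, g, rfl⟩

lemma basic_nhd (hκ : ℵ₀ < κ) {U : Set (GBS κ)} (hU : IsOpen[gbTop κ] U) :
    ∀ η ∈ U, ∃ b : TT κ, {f : GBS κ | ∀ i, i < b → f i = η i} ⊆ U := by
  have hne : Nonempty (TT κ) := neT hκ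
  have hU' : TopologicalSpace.GenerateOpen (GBaireBasic κ) U := hU
  clear hU
  induction hU' with
  | basic N hN =>
    obtain ⟨b, g, rfl⟩ := hN
    intro η hη
    exact ⟨b, fun f hf j hj => (hf j hj).trans (hη j hj)⟩
  | univ =>
    intro η _
    exact ⟨Classical.arbitrary _, fun f _ => trivial⟩
  | inter U₁ U₂ h₁ h₂ ih₁ ih₂ =>
    intro η hη
    obtain ⟨b₁, hb₁⟩ := ih₁ η hη.1
    obtain ⟨b₂, hb₂⟩ := ih₂ η hη.2
    refine ⟨max b₁ b₂, fun f hf => ⟨hb₁ ?_, hb₂ ?_⟩⟩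
    · exact fun i hi => hf i (lt_of_lt_of_le hi (le_max_left _ _))
    · exact fun i hi => hf i (lt_of_lt_of_le hi (le_max_right _ _))
  | sUnion S hS ih =>
    intro η hη
    obtain ⟨s, hs, hηs⟩ := hη
    obtain ⟨b, hb⟩ := ih s hs η hηs
    exact ⟨b, hb.trans (Set.subset_sUnion_of_mem hs)⟩

/-- One step of the construction: extend `p` so as to decide membership in the dense
open set `D`, putting the marker value `v` at coordinate `p.1`. -/
lemma step_ex (hκ : ℵ₀ < κ) {D : Set (GBS κ)} (hDo : IsOpen[gbTop κ] D)
    (hDd : ∀ V : Set (GBS κ), IsOpen[gbTop κ] V → V.Nonempty → (V ∩ D).Nonempty)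
    (p : TT κ × GBS κ) (v : TT κ) :
    ∃ q : TT κ × GBS κ, Ext p q ∧ p.1 < q.1 ∧ q.2 p.1 = v ∧
      ∀ f : GBS κ, (∀ i, i < q.1 → f i = q.2 i) → f ∈ D := by
  obtain ⟨b1, hb1⟩ := (noMaxT hκ).exists_gt p.1
  set g' : GBS κ := fun i => if i = p.1 then v else p.2 i with hg'
  have hN : ({f : GBS κ | ∀ i, i < b1 → f i = g' i}).Nonempty := ⟨g', fun _ _ => rfl⟩
  obtain ⟨f₀, hf₀N, hf₀D⟩ := hDd _ (basic_open b1 g') hN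
  obtain ⟨b2, hb2⟩ := basic_nhd hκ hDo f₀ hf₀D
  refine ⟨(max b1 b2, f₀), ⟨le_trans hb1.le (le_max_left _ _), ?_⟩,
    lt_of_lt_of_le hb1 (le_max_left _ _), ?_, ?_⟩
  · intro i hi
    show f₀ i = p.2 i
    have hfi : f₀ i = g' i := hf₀N i (hi.trans hb1)
    rw [hfi, hg']
    simp only [if_neg (ne_of_lt hi)]
  · show f₀ p.1 = v
    have hfp : f₀ p.1 = g' p.1 := hf₀N p.1 hb1
    rw [hfp, hg']
    simp
  · intro f hf
    apply hb2
    intro i hi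
    exact hf i (lt_of_lt_of_le hi (le_max_right _ _))

/-! ### The transfinite construction -/

section Construction

variable (hreg : κ.IsRegular) (hκ : ℵ₀ < κ)
  (D : TT κ → Set (GBS κ))
  (hD : ∀ i, IsOpen[gbTop κ] (D i) ∧
      (∀ V : Set (GBS κ), IsOpen[gbTop κ] V → V.Nonempty → (V ∩ D i).Nonempty))
  (p₀ : TT κ × GBS κ) (v : TT κ)

def stepF (α : TT κ) (p : TT κ × GBS κ) : TT κ × GBS κ :=
  (step_ex hκ (hD α).1 (hD α).2 p v).choose

lemma stepF_spec (α : TT κ) (p : TT κ × GBS κ) :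
    Ext p (stepF hκ D hD v α p) ∧ p.1 < (stepF hκ D hD v α p).1 ∧
      (stepF hκ D hD v α p).2 p.1 = v ∧
      ∀ f : GBS κ, (∀ i, i < (stepF hκ D hD v α p).1 → f i = (stepF hκ D hD v α p).2 i) →
        f ∈ D α :=
  (step_ex hκ (hD α).1 (hD α).2 p v).choose_spec

open scoped Classical in
def unionC (α : TT κ) (G : ∀ β : TT κ, β < α → TT κ × GBS κ) : TT κ × GBS κ :=
  (supT hreg (fun β : (Set.Iio α : Set (TT κ)) => (G β.1 β.2).1) (mk_Iio_ord_toType α) p₀.1,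
   fun i => if hh : ∃ β, ∃ hβ : β < α, i < (G β hβ).1
     then (G hh.choose hh.choose_spec.choose).2 i else p₀.2 i)

lemma unionC_fst_le (α : TT κ) (G : ∀ β : TT κ, β < α → TT κ × GBS κ)
    {β : TT κ} (hβ : β < α) : (G β hβ).1 ≤ (unionC hreg p₀ α G).1 :=
  le_supT hreg (fun β : (Set.Iio α : Set (TT κ)) => (G β.1 β.2).1)
    (mk_Iio_ord_toType α) p₀.1 ⟨β, hβ⟩

lemma unionC_base_le (α : TT κ) (G : ∀ β : TT κ, β < α → TT κ × GBS κ) :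
    p₀.1 ≤ (unionC hreg p₀ α G).1 :=
  base_le_supT hreg (fun β : (Set.Iio α : Set (TT κ)) => (G β.1 β.2).1)
    (mk_Iio_ord_toType α) p₀.1

lemma unionC_least (α : TT κ) (G : ∀ β : TT κ, β < α → TT κ × GBS κ)
    {u : TT κ} (hb : p₀.1 ≤ u) (hf : ∀ β (hβ : β < α), (G β hβ).1 ≤ u) :
    (unionC hreg p₀ α G).1 ≤ u :=
  supT_le hreg (fun β : (Set.Iio α : Set (TT κ)) => (G β.1 β.2).1)
    (mk_Iio_ord_toType α) p₀.1 hb fun β => hf β.1 β.2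

/-- If `G` is a coherent chain over `p₀`, the union extends everything. -/
lemma unionC_ext (α : TT κ) (G : ∀ β : TT κ, β < α → TT κ × GBS κ)
    (hG0 : ∀ β (hβ : β < α), Ext p₀ (G β hβ))
    (hGc : ∀ β γ (hβ : β < α) (hγ : γ < α), β ≤ γ → Ext (G β hβ) (G γ hγ)) :
    Ext p₀ (unionC hreg p₀ α G) ∧ ∀ β (hβ : β < α), Ext (G β hβ) (unionC hreg p₀ α G) := by
  classical
  constructor
  · refine ⟨unionC_base_le hreg p₀ α G, ?_⟩
    intro i hi
    simp only [unionC]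
    split_ifs with hh
    · exact (hG0 hh.choose hh.choose_spec.choose).2 i hi
    · rfl
  · intro β hβ
    refine ⟨unionC_fst_le hreg p₀ α G hβ, ?_⟩
    intro i hi
    simp only [unionC]
    have hh : ∃ β', ∃ hβ' : β' < α, i < (G β' hβ').1 := ⟨β, hβ, hi⟩
    rw [dif_pos hh]
    have hβ' : hh.choose < α := hh.choose_spec.choose
    have hi' : i < (G hh.choose hh.choose_spec.choose).1 := hh.choose_spec.choose_spec
    rcases le_total β hh.choose with hle | hle
    · exact (hGc β hh.choose hβ hβ' hle).2 i hi
    · exact ((hGc hh.choose β hβ' hβ hle).2 i hi').symm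

def F : TT κ → TT κ × GBS κ := fun α =>
  stepF hκ D hD v α (unionC hreg p₀ α (fun β hβ => F β))
termination_by α => α
decreasing_by exact hβ

lemma F_def (α : TT κ) :
    F hreg hκ D hD p₀ v α =
      stepF hκ D hD v α (unionC hreg p₀ α (fun β _ => F hreg hκ D hD p₀ v β)) := by
  conv_lhs => rw [F]

/-- The "incoming" bound at stage `α`. -/
def B (α : TT κ) : TT κ := (unionC hreg p₀ α (fun β _ => F hreg hκ D hD p₀ v β)).1

lemma F_step (α : TT κ) :
    Ext (unionC hreg p₀ α (fun β _ => F hreg hκ D hD p₀ v β)) (F hreg hκ D hD p₀ v α) ∧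
      B hreg hκ D hD p₀ v α < (F hreg hκ D hD p₀ v α).1 ∧
      (F hreg hκ D hD p₀ v α).2 (B hreg hκ D hD p₀ v α) = v ∧
      ∀ f : GBS κ, (∀ i, i < (F hreg hκ D hD p₀ v α).1 → f i = (F hreg hκ D hD p₀ v α).2 i) →
        f ∈ D α := by
  rw [F_def, B]
  exact stepF_spec hκ D hD v α _

/-- The chain property. -/
lemma F_chain : ∀ α : TT κ, Ext p₀ (F hreg hκ D hD p₀ v α) ∧
    ∀ β, β < α → Ext (F hreg hκ D hD p₀ v β) (F hreg hκ D hD p₀ v α) := by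
  intro α
  induction α using WellFoundedLT.induction with
  | ind α IH =>
    have hG0 : ∀ β (hβ : β < α), Ext p₀ (F hreg hκ D hD p₀ v β) := fun β hβ => (IH β hβ).1
    have hGc : ∀ β γ (hβ : β < α) (hγ : γ < α), β ≤ γ →
        Ext (F hreg hκ D hD p₀ v β) (F hreg hκ D hD p₀ v γ) := by
      intro β γ hβ hγ hle
      rcases eq_or_lt_of_le hle with rfl | hlt
      · exact Ext.refl _
      · exact (IH γ hγ).2 β hlt
    obtain ⟨hu0, huβ⟩ := unionC_ext hreg p₀ α (fun β _ => F hreg hκ D hD p₀ v β) hG0 hGc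
    have hstep := (F_step hreg hκ D hD p₀ v α).1
    exact ⟨hu0.trans hstep, fun β hβ => (huβ β hβ).trans hstep⟩

lemma B_le_F (α : TT κ) : B hreg hκ D hD p₀ v α ≤ (F hreg hκ D hD p₀ v α).1 :=
  (F_step hreg hκ D hD p₀ v α).2.1.le

lemma F_le_B (α : TT κ) {β : TT κ} (hβ : β < α) :
    (F hreg hκ D hD p₀ v β).1 ≤ B hreg hκ D hD p₀ v α :=
  unionC_fst_le hreg p₀ α (fun β _ => F hreg hκ D hD p₀ v β) hβ

lemma B_strictMono : StrictMono (B hreg hκ D hD p₀ v) := by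
  intro β α hβα
  calc B hreg hκ D hD p₀ v β < (F hreg hκ D hD p₀ v β).1 := (F_step hreg hκ D hD p₀ v β).2.1
    _ ≤ B hreg hκ D hD p₀ v α := F_le_B hreg hκ D hD p₀ v α hβα

lemma le_B (α : TT κ) : α ≤ B hreg hκ D hD p₀ v α :=
  (B_strictMono hreg hκ D hD p₀ v).le_apply

/-- The generic function produced by the construction. -/
def etaF : GBS κ := fun i => (F hreg hκ D hD p₀ v (nxt hκ i)).2 i

lemma etaF_agrees (α : TT κ) (i : TT κ) (hi : i < (F hreg hκ D hD p₀ v α).1) :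
    etaF hreg hκ D hD p₀ v i = (F hreg hκ D hD p₀ v α).2 i := by
  have hkey : i < (F hreg hκ D hD p₀ v (nxt hκ i)).1 :=
    lt_of_lt_of_le (lt_nxt hκ i)
      ((le_B hreg hκ D hD p₀ v (nxt hκ i)).trans (B_le_F hreg hκ D hD p₀ v (nxt hκ i)))
  rcases lt_trichotomy (nxt hκ i) α with hlt | rfl | hgt
  · exact (((F_chain hreg hκ D hD p₀ v α).2 _ hlt).2 i hkey).symm
  · rfl
  · exact ((F_chain hreg hκ D hD p₀ v (nxt hκ i)).2 _ hgt).2 i hi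

lemma etaF_mem_D (α : TT κ) : etaF hreg hκ D hD p₀ v ∈ D α :=
  (F_step hreg hκ D hD p₀ v α).2.2.2 _ fun i hi => etaF_agrees hreg hκ D hD p₀ v α i hi

lemma etaF_marker (α : TT κ) :
    etaF hreg hκ D hD p₀ v (B hreg hκ D hD p₀ v α) = v := by
  rw [etaF_agrees hreg hκ D hD p₀ v α _ (F_step hreg hκ D hD p₀ v α).2.1]
  exact (F_step hreg hκ D hD p₀ v α).2.2.1

lemma etaF_ext (i : TT κ) (hi : i < p₀.1) : etaF hreg hκ D hD p₀ v i = p₀.2 i := by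
  have h1 := (F_chain hreg hκ D hD p₀ v (nxt hκ i)).1
  exact h1.2 i hi

/-- The range of `B` is ω-cub. -/
lemma B_omegaCub : OmegaCub κ (Set.range (B hreg hκ D hD p₀ v)) := by
  constructor
  · intro a
    refine ⟨B hreg hκ D hD p₀ v (nxt hκ a), ⟨_, rfl⟩, ?_⟩
    exact lt_of_lt_of_le (lt_nxt hκ a) (le_B hreg hκ D hD p₀ v (nxt hκ a))
  · intro f hf y hy
    choose g hg using hf
    by_cases hmax : ∃ m, ∀ n, g n ≤ g m
    · obtain ⟨m, hm⟩ := hmax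
      have hub : f m ∈ upperBounds (Set.range f) := by
        rintro z ⟨n, rfl⟩
        rw [← hg n, ← hg m]
        exact (B_strictMono hreg hκ D hD p₀ v).monotone (hm n)
      have : y = f m := le_antisymm (hy.2 hub) (hy.1 ⟨m, rfl⟩)
      rw [this, ← hg m]
      exact ⟨_, rfl⟩
    · push_neg at hmax
      set s := supT hreg g (natlt hκ) (g 0) with hsdef
      have hsLUB : IsLUB (Set.range g) s := supTN_isLUB hreg hκ g
      have hglt : ∀ n, g n < s := by
        intro n
        obtain ⟨n', hn'⟩ := hmax n
        exact lt_of_lt_of_le hn' (hsLUB.1 ⟨n', rfl⟩)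
      have hBs : IsLUB (Set.range f) (B hreg hκ D hD p₀ v s) := by
        constructor
        · rintro z ⟨n, rfl⟩
          rw [← hg n]
          exact le_trans (B_le_F hreg hκ D hD p₀ v (g n)) (F_le_B hreg hκ D hD p₀ v s (hglt n))
        · intro u hu
          refine unionC_least hreg p₀ s _ ?_ ?_
          · calc p₀.1 ≤ B hreg hκ D hD p₀ v (g 0) := unionC_base_le hreg p₀ (g 0) _
              _ = f 0 := hg 0
              _ ≤ u := hu ⟨0, rfl⟩
          · intro β hβ
            have : ∃ n, β < g n := by
              by_contra hc
              push_neg at hc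
              exact absurd (hsLUB.2 fun z ⟨n, hn⟩ => hn ▸ hc n) (not_le.2 hβ)
            obtain ⟨n, hn⟩ := this
            calc (F hreg hκ D hD p₀ v β).1 ≤ B hreg hκ D hD p₀ v (g n) :=
                F_le_B hreg hκ D hD p₀ v (g n) hn
              _ = f n := hg n
              _ ≤ u := hu ⟨n, rfl⟩
      have : y = B hreg hκ D hD p₀ v s := hy.unique hBs
      rw [this]
      exact ⟨_, rfl⟩

end Construction

end S11

open S11 in
/-- For `κ > ω`, the set `CUB_ω(κ)` does not have the property of Baire. -/
theorem stmt_11 (κ : Cardinal) (hκ : ℵ₀ < κ) (h : κ ^< κ = κ) :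
    ¬ ∃ (U X : Set (GBS κ)), IsOpen[gbTop κ] U ∧ GBComeager κ X ∧
        CUBomega κ ∩ X = U ∩ X := by
  rintro ⟨U, X, hU, ⟨D, hD, hDX⟩, hEq⟩
  have hreg : κ.IsRegular := kreg hκ h
  have hne : Nonempty (TT κ) := neT hκ
  -- the "positive" run
  set t₀ := Classical.arbitrary (TT κ) with ht₀def
  set v₁ := nxt hκ t₀ with hv₁def
  set p₁ : TT κ × GBS κ := (t₀, fun _ => t₀) with hp₁def
  set η₁ := etaF hreg hκ D hD p₁ v₁ with hη₁def
  have hη₁X : η₁ ∈ X := hDX (Set.mem_iInter.2 fun α => etaF_mem_D hreg hκ D hD p₁ v₁ α)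
  have hη₁CUB : η₁ ∈ CUBomega κ := by
    refine ⟨Set.range (B hreg hκ D hD p₁ v₁), B_omegaCub hreg hκ D hD p₁ v₁, ?_⟩
    rintro a ⟨α, rfl⟩
    exact ⟨t₀, by rw [hη₁def, etaF_marker hreg hκ D hD p₁ v₁ α]; exact lt_nxt hκ t₀⟩
  have hη₁U : η₁ ∈ U := by
    have : η₁ ∈ CUBomega κ ∩ X := ⟨hη₁CUB, hη₁X⟩
    rw [hEq] at this
    exact this.1
  -- basic neighborhood inside U
  obtain ⟨b, hb⟩ := basic_nhd hκ hU η₁ hη₁U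
  -- the "zero" run
  obtain ⟨v₀, hv₀⟩ : ∃ m : TT κ, ∀ x : TT κ, ¬ x < m := by
    obtain ⟨m, -, hm⟩ := (wellFounded_lt (α := TT κ)).has_min Set.univ
      ⟨Classical.arbitrary _, trivial⟩
    exact ⟨m, fun x hx => hm x trivial hx⟩
  set p₂ : TT κ × GBS κ := (b, η₁) with hp₂def
  set η₂ := etaF hreg hκ D hD p₂ v₀ with hη₂def
  have hη₂X : η₂ ∈ X := hDX (Set.mem_iInter.2 fun α => etaF_mem_D hreg hκ D hD p₂ v₀ α)
  have hη₂U : η₂ ∈ U := hb fun i hi => etaF_ext hreg hκ D hD p₂ v₀ i hi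
  have hη₂CUB : η₂ ∈ CUBomega κ := by
    have : η₂ ∈ U ∩ X := ⟨hη₂U, hη₂X⟩
    rw [← hEq] at this
    exact this.1
  obtain ⟨X', hX', hX'sub⟩ := hη₂CUB
  obtain ⟨a, haX', haZ⟩ := omegaCub_inter hreg hκ hX' (B_omegaCub hreg hκ D hD p₂ v₀)
  obtain ⟨α, rfl⟩ := haZ
  obtain ⟨y, hy⟩ := hX'sub haX'
  rw [hη₂def, etaF_marker hreg hκ D hD p₂ v₀ α] at hy
  exact hv₀ y hy
end
end

section
/- Assume κ^{<κ} = κ with κ > ω. For any open set U ⊆ κ^κ and any family (X_i)_{i<κ} of dense open subsets of κ^κ, there exists η ∈ U ∩ ⋂_{i<κ} X_i such that the set {α < κ | η(α) > 0} does not contain an ω-cub subset of κ; in fact {α | η(α) = 0} contains a set closed under suprema of increasing ω-sequences that is unbounded in κ. -/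
open Cardinal Ordinal Set Topology
noncomputable section

namespace StmtAux

/-! ### Ordinal/`toType` translation -/

def tyO {o : Ordinal} (x : o.ToType) : Ordinal := (((ToType.mk (o := o))).symm x : Iio o)

theorem tyO_lt {o : Ordinal} (x : o.ToType) : tyO x < o := (((ToType.mk (o := o))).symm x).2

def en {o : Ordinal} (t : Ordinal) (ht : t < o) : o.ToType := (ToType.mk (o := o)) ⟨t, ht⟩

theorem tyO_en {o : Ordinal} {t : Ordinal} (ht : t < o) : tyO (en t ht) = t := by
  simp [tyO, en]

theorem en_tyO {o : Ordinal} (x : o.ToType) : en (tyO x) (tyO_lt x) = x := by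
  simp [tyO, en]

theorem lt_iff_tyO {o : Ordinal} {x y : o.ToType} : x < y ↔ tyO x < tyO y :=
  ((Subtype.coe_lt_coe).trans (((ToType.mk (o := o))).symm.lt_iff_lt)).symm

theorem le_iff_tyO {o : Ordinal} {x y : o.ToType} : x ≤ y ↔ tyO x ≤ tyO y := by
  rw [← not_lt, ← not_lt, lt_iff_tyO]

theorem tyO_inj {o : Ordinal} {x y : o.ToType} (h : tyO x = tyO y) : x = y :=
  le_antisymm (le_iff_tyO.2 h.le) (le_iff_tyO.2 h.ge)

theorem kreg {κ : Cardinal} (hκ : ℵ₀ < κ) (h : κ ^< κ = κ) : κ.IsRegular := by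
  refine ⟨hκ.le, ?_⟩
  have hle : κ.ord.cof ≤ κ := by
    simpa using (Ordinal.cof_le_card κ.ord).trans_eq (Cardinal.card_ord κ)
  rcases lt_or_eq_of_le hle with hlt | he
  · exfalso
    have h1 := Cardinal.lt_power_cof hκ.le
    have h2 : κ ^ κ.ord.cof ≤ κ ^< κ := Cardinal.le_powerlt κ hlt
    rw [h] at h2
    exact absurd (h1.trans_le h2) (lt_irrefl κ)
  · exact he.ge

theorem ord_pos' {κ : Cardinal} (hκ : ℵ₀ < κ) : (0:Ordinal) < κ.ord := by
  rw [← Cardinal.ord_zero]; exact Cardinal.ord_lt_ord.2 (aleph0_pos.trans hκ)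

theorem T_nonempty {κ : Cardinal} (hκ : ℵ₀ < κ) : Nonempty κ.ord.ToType :=
  Ordinal.nonempty_toType_iff.2 (ord_pos' hκ).ne'

/-- In an open set, every point has a basic neighborhood. -/
theorem exists_basic_subset {κ : Cardinal} (hκ : ℵ₀ < κ) {V : Set (GBS κ)}
    (hV : TopologicalSpace.GenerateOpen (GBaireBasic κ) V) :
    ∀ g ∈ V, ∃ b : κ.ord.ToType, {f : GBS κ | ∀ x, x < b → f x = g x} ⊆ V := by
  induction hV with
  | basic N hN =>
    intro g hg
    obtain ⟨b, η, rfl⟩ := hN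
    exact ⟨b, fun f hf x hx => (hf x hx).trans (hg x hx)⟩
  | univ => exact fun g _ => ⟨(T_nonempty hκ).some, fun _ _ => trivial⟩
  | inter s t _ _ ihs iht =>
    intro g hg
    obtain ⟨b1, hb1⟩ := ihs g hg.1
    obtain ⟨b2, hb2⟩ := iht g hg.2
    exact ⟨max b1 b2, fun f hf =>
      ⟨hb1 fun x hx => hf x (lt_of_lt_of_le hx (le_max_left _ _)),
       hb2 fun x hx => hf x (lt_of_lt_of_le hx (le_max_right _ _))⟩⟩
  | sUnion S _ ih =>
    intro g hg
    obtain ⟨s, hs, hgs⟩ := hg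
    obtain ⟨b, hb⟩ := ih s hs g hgs
    exact ⟨b, fun f hf => ⟨s, hs, hb hf⟩⟩

/-- One extension step: extend a partial function (given on ordinals `< dom`)
so that the resulting basic set is inside the dense open set `W`. -/
theorem extend_step {κ : Cardinal} (hκ : ℵ₀ < κ) {W : Set (GBS κ)}
    (hWo : IsOpen[gbTop κ] W)
    (hWd : ∀ V : Set (GBS κ), IsOpen[gbTop κ] V → V.Nonempty → (V ∩ W).Nonempty)
    (q : Ordinal → κ.ord.ToType) {dom : Ordinal} (hdom : dom < κ.ord) :
    ∃ p : Ordinal → κ.ord.ToType, ∃ a : Ordinal,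
      dom ≤ a ∧ a < κ.ord ∧ (∀ t, t < dom → p t = q t) ∧
      {f : GBS κ | ∀ x, tyO x < a → f x = p (tyO x)} ⊆ W := by
  set V : Set (GBS κ) := {f | ∀ x : κ.ord.ToType, tyO x < dom → f x = q (tyO x)} with hVdef
  have hVopen : IsOpen[gbTop κ] V := by
    apply TopologicalSpace.GenerateOpen.basic
    refine ⟨en dom hdom, fun x => q (tyO x), ?_⟩
    ext f
    constructor
    · intro hf x hx
      exact hf x (by rwa [lt_iff_tyO, tyO_en] at hx)
    · intro hf x hx
      exact hf x (by rwa [lt_iff_tyO, tyO_en])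
  have hVne : V.Nonempty := ⟨fun x => q (tyO x), fun x _ => rfl⟩
  obtain ⟨g, hgV, hgW⟩ := hWd V hVopen hVne
  obtain ⟨b', hb'⟩ := exists_basic_subset hκ hWo g hgW
  refine ⟨fun t => if ht : t < κ.ord then g (en t ht) else g (en dom hdom),
    max dom (tyO b'), le_max_left _ _, max_lt hdom (tyO_lt b'), ?_, ?_⟩
  · intro t htd
    dsimp only
    rw [dif_pos (htd.trans hdom)]
    have := hgV (en t (htd.trans hdom)) (by rw [tyO_en]; exact htd)
    rw [this, tyO_en]
  · intro f hf
    apply hb'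
    intro x hx
    have h1 : tyO x < max dom (tyO b') :=
      lt_of_lt_of_le (lt_iff_tyO.1 hx) (le_max_right _ _)
    have h2 := hf x h1
    dsimp only at h2
    rw [h2, dif_pos (tyO_lt x), en_tyO]

/-! ### The construction context -/

structure Ctx (κ : Cardinal) : Type 1 where
  hκ : ℵ₀ < κ
  hpl : κ ^< κ = κ
  U : Set (GBS κ)
  hU : IsOpen[gbTop κ] U
  hUne : U.Nonempty
  X : κ.ord.ToType → Set (GBS κ)
  hX : ∀ i, IsOpen[gbTop κ] (X i) ∧
      (∀ V : Set (GBS κ), IsOpen[gbTop κ] V → V.Nonempty → (V ∩ X i).Nonempty)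

variable {κ : Cardinal}

open scoped Classical

theorem Ctx.reg (c : Ctx κ) : κ.IsRegular := kreg c.hκ c.hpl
theorem Ctx.opos (c : Ctx κ) : (0:Ordinal) < κ.ord := ord_pos' c.hκ
theorem Ctx.olim (c : Ctx κ) : Order.IsSuccLimit κ.ord := Cardinal.isSuccLimit_ord c.hκ.le

def zeroT (c : Ctx κ) : κ.ord.ToType := en 0 c.opos

theorem zeroT_isMin (c : Ctx κ) : IsMin (zeroT c) := by
  intro b _
  rw [le_iff_tyO, zeroT, tyO_en]
  exact zero_le

def g0 (c : Ctx κ) : GBS κ := c.hUne.choose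
theorem g0_mem (c : Ctx κ) : g0 c ∈ c.U := c.hUne.choose_spec
def b0 (c : Ctx κ) : κ.ord.ToType := (exists_basic_subset c.hκ c.hU (g0 c) (g0_mem c)).choose
theorem b0_spec (c : Ctx κ) : {f : GBS κ | ∀ x, x < b0 c → f x = g0 c x} ⊆ c.U :=
  (exists_basic_subset c.hκ c.hU (g0 c) (g0_mem c)).choose_spec

def dom0 (c : Ctx κ) : Ordinal := tyO (b0 c)
theorem dom0_lt (c : Ctx κ) : dom0 c < κ.ord := tyO_lt _

def q0 (c : Ctx κ) : Ordinal → κ.ord.ToType :=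
  fun t => if ht : t < κ.ord then g0 c (en t ht) else zeroT c

/-! ### The transfinite recursion -/

def stageF (c : Ctx κ) (i : Ordinal) (rec : ∀ j, j < i → Ordinal × (Ordinal → κ.ord.ToType)) :
    Ordinal × (Ordinal → κ.ord.ToType) :=
  let bD : Ordinal := if i = 0 then dom0 c else (⨆ x : i.ToType, (rec (tyO x) (tyO_lt x)).1) + 1
  let bF : Ordinal → κ.ord.ToType :=
    if i = 0 then q0 c else fun t =>
      if hj : ∃ j : Iio i, t < (rec j.1 j.2).1 then (rec hj.choose.1 hj.choose.2).2 t
      else zeroT c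
  if hcond : i < κ.ord ∧ bD < κ.ord then
    let E := extend_step c.hκ (c.hX (en i hcond.1)).1 (c.hX (en i hcond.1)).2 bF hcond.2
    (E.choose_spec.choose, E.choose)
  else (0, fun _ => zeroT c)

def stage (c : Ctx κ) : Ordinal → Ordinal × (Ordinal → κ.ord.ToType) :=
  Ordinal.lt_wf.fix (stageF c)

theorem stage_def (c : Ctx κ) (i : Ordinal) : stage c i = stageF c i (fun j _ => stage c j) :=
  Ordinal.lt_wf.fix_eq _ i

def sA (c : Ctx κ) (i : Ordinal) : Ordinal := (stage c i).1
def sP (c : Ctx κ) (i : Ordinal) : Ordinal → κ.ord.ToType := (stage c i).2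
def sB (c : Ctx κ) (i : Ordinal) : Ordinal := ⨆ x : i.ToType, sA c (tyO x)
def sDom (c : Ctx κ) (i : Ordinal) : Ordinal := if i = 0 then dom0 c else sB c i + 1
def sQ (c : Ctx κ) (i : Ordinal) : Ordinal → κ.ord.ToType :=
  if i = 0 then q0 c else fun t =>
    if hj : ∃ j : Iio i, t < sA c j.1 then sP c hj.choose.1 t else zeroT c

theorem stage_eq (c : Ctx κ) (i : Ordinal) :
    stage c i =
      if hcond : i < κ.ord ∧ sDom c i < κ.ord then
        let E := extend_step c.hκ (c.hX (en i hcond.1)).1 (c.hX (en i hcond.1)).2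
          (sQ c i) hcond.2
        (E.choose_spec.choose, E.choose)
      else (0, fun _ => zeroT c) := by
  rw [stage_def]
  rfl

/-! ### Invariants -/

theorem sB_le (c : Ctx κ) {i j : Ordinal} (hj : j < i) : sA c j ≤ sB c i := by
  have := le_ciSup (f := fun x : i.ToType => sA c (tyO x))
    (Ordinal.bddAbove_range _) (en j hj)
  rwa [tyO_en] at this

theorem sB_mono (c : Ctx κ) {i j : Ordinal} (hj : j ≤ i) : sB c j ≤ sB c i :=
  ciSup_le' fun x => sB_le c (lt_of_lt_of_le (tyO_lt x) hj)

theorem inv (c : Ctx κ) : ∀ i, ∀ hi : i < κ.ord,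
    sDom c i < κ.ord ∧ sDom c i ≤ sA c i ∧ sA c i < κ.ord ∧
    (∀ t, t < sDom c i → sP c i t = sQ c i t) ∧
    {f : GBS κ | ∀ x, tyO x < sA c i → f x = sP c i (tyO x)} ⊆ c.X (en i hi) := by
  intro i
  induction i using Ordinal.induction with
  | h i IH =>
    intro hi
    have hdom : sDom c i < κ.ord := by
      rcases eq_or_ne i 0 with h0 | h0
      · rw [sDom, if_pos h0]; exact dom0_lt c
      · rw [sDom, if_neg h0]
        have hB : sB c i < κ.ord := by
          apply Cardinal.iSup_lt_ord_lift_of_isRegular c.reg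
          · rw [Cardinal.lift_id, Cardinal.mk_toType]
            exact Cardinal.lt_ord.1 hi
          · intro x
            exact ((IH (tyO x) (tyO_lt x)) ((tyO_lt x).trans hi)).2.2.1
        have := c.olim.succ_lt hB
        rwa [← Ordinal.add_one_eq_succ] at this
    have hs : stage c i =
        (let E := extend_step c.hκ (c.hX (en i hi)).1 (c.hX (en i hi)).2 (sQ c i) hdom
         (E.choose_spec.choose, E.choose)) := by
      rw [stage_eq c i, dif_pos ⟨hi, hdom⟩]
    set E := extend_step c.hκ (c.hX (en i hi)).1 (c.hX (en i hi)).2 (sQ c i) hdom with hE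
    obtain ⟨ha1, ha2, ha3, ha4⟩ := E.choose_spec.choose_spec
    have hsA : sA c i = E.choose_spec.choose := by rw [sA, hs]
    have hsP : sP c i = E.choose := by rw [sP, hs]
    refine ⟨hdom, ?_, ?_, ?_, ?_⟩
    · rw [hsA]; exact ha1
    · rw [hsA]; exact ha2
    · intro t ht; rw [hsP]; exact ha3 t ht
    · rw [hsA, hsP]; exact ha4

theorem sDom_lt (c : Ctx κ) {i : Ordinal} (hi : i < κ.ord) : sDom c i < κ.ord :=
  (inv c i hi).1
theorem sDom_le_sA (c : Ctx κ) {i : Ordinal} (hi : i < κ.ord) : sDom c i ≤ sA c i :=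
  (inv c i hi).2.1
theorem sA_lt (c : Ctx κ) {i : Ordinal} (hi : i < κ.ord) : sA c i < κ.ord :=
  (inv c i hi).2.2.1
theorem sP_eq_sQ (c : Ctx κ) {i : Ordinal} (hi : i < κ.ord) :
    ∀ t, t < sDom c i → sP c i t = sQ c i t := (inv c i hi).2.2.2.1
theorem sA_subset (c : Ctx κ) {i : Ordinal} (hi : i < κ.ord) :
    {f : GBS κ | ∀ x, tyO x < sA c i → f x = sP c i (tyO x)} ⊆ c.X (en i hi) :=
  (inv c i hi).2.2.2.2

theorem sB_lt_sDom (c : Ctx κ) {i : Ordinal} (h0 : i ≠ 0) : sB c i < sDom c i := by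
  rw [sDom, if_neg h0, Ordinal.add_one_eq_succ]; exact Order.lt_succ _

theorem sB_lt (c : Ctx κ) {i : Ordinal} (hi : i < κ.ord) (h0 : i ≠ 0) : sB c i < κ.ord :=
  (sB_lt_sDom c h0).trans (sDom_lt c hi)

theorem sA_mono (c : Ctx κ) {i j : Ordinal} (hj : j < i) (hi : i < κ.ord) :
    sA c j < sA c i := by
  have h0 : i ≠ 0 := fun h => by simp [h] at hj
  calc sA c j ≤ sB c i := sB_le c hj
    _ < sDom c i := sB_lt_sDom c h0
    _ ≤ sA c i := sDom_le_sA c hi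

theorem sA_ge (c : Ctx κ) : ∀ i, i < κ.ord → i ≤ sA c i := by
  intro i
  induction i using Ordinal.induction with
  | h i IH =>
    intro hi
    by_contra hlt
    push_neg at hlt
    have h1 : sA c (sA c i) < sA c i := sA_mono c hlt hi
    have h2 : sA c i ≤ sA c (sA c i) := IH (sA c i) hlt (hlt.trans hi)
    exact absurd (h2.trans_lt h1) (lt_irrefl _)

theorem coh (c : Ctx κ) : ∀ i, i < κ.ord → ∀ j, j < i → ∀ t, t < sA c j →
    sP c i t = sP c j t := by
  intro i
  induction i using Ordinal.induction with
  | h i IH =>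
    intro hi j hj t ht
    have h0 : i ≠ 0 := fun h => (not_lt_of_ge (zero_le : 0 ≤ j)) (h ▸ hj)
    have htD : t < sDom c i := ht.trans_le ((sB_le c hj).trans (sB_lt_sDom c h0).le)
    rw [sP_eq_sQ c hi t htD]
    have hex : ∃ j' : Iio i, t < sA c j'.1 := ⟨⟨j, hj⟩, ht⟩
    rw [sQ, if_neg h0, dif_pos hex]
    set j' := hex.choose with hj'
    have hj'2 : t < sA c j'.1 := hex.choose_spec
    have hj'i : j'.1 < i := j'.2
    rcases lt_trichotomy j'.1 j with hc | hc | hc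
    · exact (IH j hj (hj.trans hi) j'.1 hc t hj'2).symm
    · rw [hc]
    · exact IH j'.1 hj'i (hj'i.trans hi) j hc t ht


theorem cohLe (c : Ctx κ) {i j : Ordinal} (hji : j ≤ i) (hi : i < κ.ord) {t : Ordinal}
    (ht : t < sA c j) : sP c i t = sP c j t := by
  rcases eq_or_lt_of_le hji with rfl | hlt
  · rfl
  · exact coh c i hi j hlt t ht

/-! ### The generic function -/

def eta (c : Ctx κ) : GBS κ := fun x => sP c (tyO x + 1) (tyO x)

theorem succ_lt_ord (c : Ctx κ) {t : Ordinal} (ht : t < κ.ord) : t + 1 < κ.ord := by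
  rw [Ordinal.add_one_eq_succ]; exact c.olim.succ_lt ht

theorem lt_sA_succ (c : Ctx κ) {t : Ordinal} (ht : t < κ.ord) : t < sA c (t + 1) := by
  have h1 : sA c t + 1 ≤ sDom c (t + 1) := by
    rw [sDom, if_neg (by rw [Ordinal.add_one_eq_succ]; exact Ordinal.succ_ne_zero t)]
    exact add_le_add_left (sB_le c (lt_add_one t)) 1
  have h2 : t < sA c t + 1 := lt_of_le_of_lt (sA_ge c t ht) (lt_add_one _)
  exact h2.trans_le (h1.trans (sDom_le_sA c (succ_lt_ord c ht)))

theorem eta_agree (c : Ctx κ) {i : Ordinal} (hi : i < κ.ord) {t : Ordinal}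
    (ht : t < sA c i) (hto : t < κ.ord) : eta c (en t hto) = sP c i t := by
  have h1 : eta c (en t hto) = sP c (t + 1) t := by
    rw [eta]
    congr 1 <;> rw [tyO_en]
  rw [h1]
  rcases le_total i (t + 1) with hc | hc
  · exact cohLe c hc (succ_lt_ord c hto) ht
  · exact (cohLe c hc hi (lt_sA_succ c hto)).symm

theorem eta_mem_X (c : Ctx κ) (e : κ.ord.ToType) : eta c ∈ c.X e := by
  have hi : tyO e < κ.ord := tyO_lt e
  have hsub := sA_subset c hi
  rw [en_tyO e] at hsub
  apply hsub
  intro x hx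
  have := eta_agree c hi hx (tyO_lt x)
  rwa [en_tyO x] at this

theorem eta_mem_U (c : Ctx κ) : eta c ∈ c.U := by
  apply b0_spec c
  intro x hx
  have h1 : tyO x < sDom c 0 := by
    rw [sDom, if_pos rfl, dom0]
    exact lt_iff_tyO.1 hx
  have h2 : tyO x < sA c 0 := h1.trans_le (sDom_le_sA c c.opos)
  have h3 := eta_agree c c.opos h2 (tyO_lt x)
  rw [en_tyO x] at h3
  rw [h3, sP_eq_sQ c c.opos _ h1, sQ, if_pos rfl, q0, dif_pos (tyO_lt x), en_tyO x]

theorem eta_zero_at_sB (c : Ctx κ) {i : Ordinal} (hi : i < κ.ord) (h0 : i ≠ 0)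
    (hb : sB c i < κ.ord) : eta c (en (sB c i) hb) = zeroT c := by
  have h1 : sB c i < sA c i := (sB_lt_sDom c h0).trans_le (sDom_le_sA c hi)
  rw [eta_agree c hi h1 hb, sP_eq_sQ c hi _ (sB_lt_sDom c h0), sQ, if_neg h0]
  rw [dif_neg]
  rintro ⟨j, hj⟩
  exact absurd hj (not_lt.2 (sB_le c j.2))

theorem sB_ge_limit (c : Ctx κ) {i : Ordinal} (hi : i < κ.ord) (hlim : Order.IsSuccLimit i) :
    i ≤ sB c i := by
  by_contra hlt
  push_neg at hlt
  have h1 : sB c i + 1 < i := by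
    rw [Ordinal.add_one_eq_succ]; exact hlim.succ_lt hlt
  have h2 : sA c (sB c i + 1) ≤ sB c i := sB_le c h1
  have h3 : sB c i + 1 ≤ sA c (sB c i + 1) := sA_ge c _ (h1.trans hi)
  exact absurd (h3.trans h2) (not_le.2 (lt_add_one _))

/-! ### The ω-club of zeros -/

def Sset (c : Ctx κ) : Set κ.ord.ToType :=
  {x | ∃ i, i < κ.ord ∧ Order.IsSuccLimit i ∧ tyO x = sB c i}

theorem Sset_isMin (c : Ctx κ) : Sset c ⊆ {a | IsMin (eta c a)} := by
  rintro x ⟨i, hi, hlim, hx⟩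
  have hb : sB c i < κ.ord := sB_lt c hi hlim.pos.ne'
  have hxe : x = en (sB c i) hb := tyO_inj (by rw [hx, tyO_en])
  show IsMin (eta c x)
  rw [hxe, eta_zero_at_sB c hi hlim.pos.ne' hb]
  exact zeroT_isMin c

theorem Sset_unbounded (c : Ctx κ) (a : κ.ord.ToType) : ∃ x ∈ Sset c, a < x := by
  set i : Ordinal := tyO a + ω with hidef
  have hlim : Order.IsSuccLimit i := Ordinal.isSuccLimit_add _ Ordinal.isSuccLimit_omega0
  have hi : i < κ.ord := by
    rw [Cardinal.lt_ord, hidef, Ordinal.card_add, Ordinal.card_omega0]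
    exact Cardinal.add_lt_of_lt c.hκ.le (Cardinal.lt_ord.1 (tyO_lt a)) c.hκ
  have hb : sB c i < κ.ord := sB_lt c hi hlim.pos.ne'
  refine ⟨en (sB c i) hb, ⟨i, hi, hlim, tyO_en hb⟩, ?_⟩
  rw [lt_iff_tyO, tyO_en]
  calc tyO a < i := by
        rw [hidef]
        simpa using (add_lt_add_iff_left (tyO a)).2 Ordinal.omega0_pos
    _ ≤ sB c i := sB_ge_limit c hi hlim

theorem Sset_closed (c : Ctx κ) (f : ℕ → κ.ord.ToType) (hmono : StrictMono f)
    (hmem : ∀ n, f n ∈ Sset c) (y : κ.ord.ToType) (hy : IsLUB (Set.range f) y) :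
    y ∈ Sset c := by
  choose iseq hilt hilim hieq using hmem
  have himono : StrictMono iseq := by
    intro n m hnm
    by_contra hle
    push_neg at hle
    have := sB_mono c hle
    rw [← hieq, ← hieq] at this
    exact absurd (lt_iff_tyO.1 (hmono hnm)) (not_lt.2 this)
  set istar : Ordinal := ⨆ n, iseq n with histar
  have hile : ∀ n, iseq n ≤ istar := fun n => le_ciSup (Ordinal.bddAbove_range _) n
  have histarlt : istar < κ.ord := by
    apply Cardinal.iSup_lt_ord_lift_of_isRegular c.reg
    · simpa using c.hκ
    · exact fun n => hilt n
  have hexn : ∀ t, t < istar → ∃ n, t < iseq n := by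
    intro t ht
    by_contra hno
    push_neg at hno
    exact absurd (ciSup_le' hno) (not_le.2 ht)
  have hlimstar : Order.IsSuccLimit istar := by
    rw [Ordinal.isSuccLimit_iff, Order.isSuccPrelimit_iff_succ_lt]
    constructor
    · have hpos : (0:Ordinal) < istar :=
        lt_of_le_of_lt (zero_le : (0:Ordinal) ≤ iseq 0)
          ((himono (Nat.lt_succ_self 0)).trans_le (hile 1))
      exact hpos.ne'
    · intro t ht
      obtain ⟨n, hn⟩ := hexn t ht
      have : Order.succ t ≤ iseq n := Order.succ_le_of_lt hn
      exact this.trans_lt ((himono (lt_add_one n)).trans_le (hile (n+1)))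
  have hbstar : sB c istar < κ.ord := sB_lt c histarlt hlimstar.pos.ne'
  have hclaim : IsLUB (Set.range f) (en (sB c istar) hbstar) := by
    constructor
    · rintro _ ⟨n, rfl⟩
      rw [le_iff_tyO, tyO_en, hieq n]
      exact sB_mono c (hile n)
    · intro v hv
      rw [le_iff_tyO, tyO_en]
      apply ciSup_le'
      intro x
      obtain ⟨n, hn⟩ := hexn (tyO x) (tyO_lt x)
      calc sA c (tyO x) ≤ sB c (iseq n) := sB_le c hn
        _ = tyO (f n) := (hieq n).symm
        _ ≤ tyO v := le_iff_tyO.1 (hv ⟨n, rfl⟩)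
  have : y = en (sB c istar) hbstar := hy.unique hclaim
  exact ⟨istar, histarlt, hlimstar, by rw [this, tyO_en]⟩


/-! ### LUB facts in `κ.ord.ToType` -/

theorem exists_isLUB {o : Ordinal} {s : Set o.ToType} (hbd : BddAbove s) :
    ∃ y, IsLUB s y := by
  obtain ⟨u, hu⟩ := hbd
  have wf : WellFounded ((· < ·) : o.ToType → o.ToType → Prop) := wellFounded_lt
  refine ⟨wf.min (upperBounds s) ⟨u, hu⟩, wf.min_mem _ _, fun v hv => ?_⟩
  exact not_lt.1 (wf.not_lt_min _ hv)

theorem bdd_of_seq (c : Ctx κ) (g : ℕ → κ.ord.ToType) : BddAbove (Set.range g) := by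
  have hσ : (⨆ n, tyO (g n)) < κ.ord := by
    apply Cardinal.iSup_lt_ord_lift_of_isRegular c.reg
    · simpa using c.hκ
    · exact fun n => tyO_lt _
  refine ⟨en _ hσ, ?_⟩
  rintro _ ⟨n, rfl⟩
  rw [le_iff_tyO, tyO_en]
  exact le_ciSup (Ordinal.bddAbove_range _) n

/-! ### No ω-cub of nonzero values -/

theorem no_omegaCub (c : Ctx κ) :
    ¬ ∃ S : Set κ.ord.ToType, OmegaCub κ S ∧ S ⊆ {a | ∃ y, y < eta c a} := by
  rintro ⟨S', ⟨hunb, hcl⟩, hsub⟩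
  haveI : Nonempty κ.ord.ToType := T_nonempty c.hκ
  -- interleave a sequence alternating between `S'` and `Sset c`
  set nxt : κ.ord.ToType → κ.ord.ToType := fun v => (hunb v).choose with hnxt
  have hnxt1 : ∀ v, nxt v ∈ S' := fun v => (hunb v).choose_spec.1
  have hnxt2 : ∀ v, v < nxt v := fun v => (hunb v).choose_spec.2
  set nxs : κ.ord.ToType → κ.ord.ToType := fun v => (Sset_unbounded c v).choose with hnxs
  have hnxs1 : ∀ v, nxs v ∈ Sset c := fun v => (Sset_unbounded c v).choose_spec.1
  have hnxs2 : ∀ v, v < nxs v := fun v => (Sset_unbounded c v).choose_spec.2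
  set seq : ℕ → κ.ord.ToType × κ.ord.ToType := fun n =>
    Nat.rec (let s := nxt Classical.ofNonempty; (s, nxs s))
      (fun _ p => let s := nxt p.2; (s, nxs s)) n with hseq
  have hseqS : ∀ n, (seq n).1 ∈ S' := by
    intro n; cases n with
    | zero => exact hnxt1 _
    | succ m => exact hnxt1 _
  have hseqT : ∀ n, (seq n).2 ∈ Sset c := by
    intro n; cases n with
    | zero => exact hnxs1 _
    | succ m => exact hnxs1 _
  have hlt1 : ∀ n, (seq n).1 < (seq n).2 := by
    intro n; cases n with
    | zero => exact hnxs2 _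
    | succ m => exact hnxs2 _
  have hlt2 : ∀ n, (seq n).2 < (seq (n+1)).1 := fun n => hnxt2 _
  set gE : ℕ → κ.ord.ToType := fun n => (seq n).1 with hgE
  set gO : ℕ → κ.ord.ToType := fun n => (seq n).2 with hgO
  have hEOmono : ∀ n, gO n < gO (n+1) := fun n => (hlt2 n).trans (hlt1 (n+1))
  have hOmono : StrictMono gO := strictMono_nat_of_lt_succ hEOmono
  obtain ⟨y, hy⟩ := exists_isLUB (bdd_of_seq c gO)
  have hub_eq : upperBounds (Set.range gE) = upperBounds (Set.range gO) := by
    ext v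
    simp only [mem_upperBounds, forall_mem_range]
    constructor
    · intro hv n
      exact le_of_lt (lt_of_lt_of_le (hlt2 n) (hv (n+1)))
    · intro hv n
      exact le_of_lt (lt_of_lt_of_le (hlt1 n) (hv n))
  have hyE : IsLUB (Set.range gE) y := by
    show IsLeast (upperBounds (Set.range gE)) y
    rw [hub_eq]
    exact hy
  have hyS' : y ∈ S' := hcl gE hseqS y hyE
  have hyS : y ∈ Sset c := Sset_closed c gO hOmono hseqT y hy
  obtain ⟨z, hz⟩ := hsub hyS'
  have hmin : IsMin (eta c y) := Sset_isMin c hyS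
  exact absurd (hz.trans_le (hmin hz.le)) (lt_irrefl z)

end StmtAux

/-- Given a nonempty open `U` and `κ` many dense open sets `X i`, there is
`η ∈ U ∩ ⋂ i, X i` such that `{α | η α > 0}` contains no ω-cub set; in fact
`{α | η α = 0}` contains an unbounded set closed under suprema of strictly
increasing ω-sequences. -/
theorem stmt_12 (κ : Cardinal) (hκ : ℵ₀ < κ) (h : κ ^< κ = κ)
    (U : Set (GBS κ)) (hU : IsOpen[gbTop κ] U) (hUne : U.Nonempty)
    (X : κ.ord.ToType → Set (GBS κ))
    (hX : ∀ i, IsOpen[gbTop κ] (X i) ∧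
      (∀ V : Set (GBS κ), IsOpen[gbTop κ] V → V.Nonempty → (V ∩ X i).Nonempty)) :
    ∃ η ∈ U ∩ ⋂ i, X i,
      (¬ ∃ S : Set κ.ord.ToType, OmegaCub κ S ∧ S ⊆ {a | ∃ y, y < η a}) ∧
      ∃ S : Set κ.ord.ToType, S ⊆ {a | IsMin (η a)} ∧
        (∀ a, ∃ x ∈ S, a < x) ∧
        (∀ f : ℕ → κ.ord.ToType, StrictMono f → (∀ n, f n ∈ S) →
          ∀ y, IsLUB (Set.range f) y → y ∈ S) := by
  set c : StmtAux.Ctx κ := ⟨hκ, h, U, hU, hUne, X, hX⟩ with hc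
  exact ⟨StmtAux.eta c, ⟨StmtAux.eta_mem_U c, Set.mem_iInter.2 (StmtAux.eta_mem_X c)⟩,
    StmtAux.no_omegaCub c, StmtAux.Sset c, StmtAux.Sset_isMin c, StmtAux.Sset_unbounded c,
    fun f hm hmem y hy => StmtAux.Sset_closed c f hm hmem y hy⟩
end
end

section
/- Assume κ^{<κ} = κ. Then Δ¹₁(κ) ≠ Σ¹₁(κ): there is a Σ¹₁(κ) subset of κ^κ whose complement is not Σ¹₁(κ). -/
open Cardinal Ordinal Set Topology
noncomputable section

namespace Stmt15Aux

/-- The underlying index type. -/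
abbrev T (κ : Cardinal) := κ.ord.ToType

/-- Basic neighborhood of `x` determined by the initial segment below `b`. -/
def Nb {κ : Cardinal} (b : T κ) (x : GBS κ) : Set (GBS κ) :=
  {f | ∀ i, i < b → f i = x i}

lemma Nb_basic {κ : Cardinal} (b : T κ) (x : GBS κ) : Nb b x ∈ GBaireBasic κ :=
  ⟨b, x, rfl⟩

lemma self_mem_Nb {κ : Cardinal} (b : T κ) (x : GBS κ) : x ∈ Nb b x :=
  fun _ _ => rfl

lemma isOpen_iff {κ : Cardinal} (hκ : ℵ₀ ≤ κ) (U : Set (GBS κ)) :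
    IsOpen[gbTop κ] U ↔ ∀ x ∈ U, ∃ b, Nb b x ⊆ U := by
  haveI hinf : Infinite (T κ) := by
    rw [Cardinal.infinite_iff, Cardinal.mk_toType, Cardinal.card_ord]; exact hκ
  constructor
  · intro hU
    have hU' : TopologicalSpace.GenerateOpen (GBaireBasic κ) U := hU
    clear hU
    induction hU' with
    | basic s hs =>
      obtain ⟨b, η, rfl⟩ := hs
      intro x hx
      exact ⟨b, fun f hf i hi => (hf i hi).trans (hx i hi)⟩
    | univ =>
      intro x _
      exact ⟨Classical.arbitrary _, fun _ _ => trivial⟩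
    | inter s t hs ht ihs iht =>
      intro x hx
      obtain ⟨b₁, h₁⟩ := ihs x hx.1
      obtain ⟨b₂, h₂⟩ := iht x hx.2
      refine ⟨max b₁ b₂, fun f hf => ⟨h₁ fun i hi => hf i (hi.trans_le (le_max_left _ _)),
        h₂ fun i hi => hf i (hi.trans_le (le_max_right _ _))⟩⟩
    | sUnion S hS ih =>
      rintro x ⟨s, hs, hxs⟩
      obtain ⟨b, hb⟩ := ih s hs x hxs
      exact ⟨b, fun f hf => ⟨s, hs, hb hf⟩⟩
  · intro hU
    letI := gbTop κ
    rw [isOpen_iff_forall_mem_open]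
    intro x hx
    obtain ⟨b, hb⟩ := hU x hx
    exact ⟨Nb b x, hb, TopologicalSpace.isOpen_generateFrom_of_mem (Nb_basic b x),
      self_mem_Nb b x⟩

lemma closed_char {κ : Cardinal} (hκ : ℵ₀ ≤ κ) :
    letI := gbTop κ
    ∀ {C : Set (GBS κ × GBS κ)}, IsClosed C → ∀ {q : GBS κ × GBS κ}, q ∉ C →
      ∃ b, Disjoint (Nb b q.1 ×ˢ Nb b q.2) C := by
  letI := gbTop κ
  intro C hC q hq
  have hopen : IsOpen Cᶜ := hC.isOpen_compl
  rw [isOpen_prod_iff] at hopen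
  obtain ⟨u, v, hu, hv, hqu, hqv, huv⟩ := hopen q.1 q.2 hq
  obtain ⟨b₁, h₁⟩ := (isOpen_iff hκ u).mp hu q.1 hqu
  obtain ⟨b₂, h₂⟩ := (isOpen_iff hκ v).mp hv q.2 hqv
  refine ⟨max b₁ b₂, Set.disjoint_left.mpr ?_⟩
  rintro ⟨a, c⟩ ⟨ha, hc⟩ hmemC
  exact huv ⟨h₁ fun i hi => ha i (hi.trans_le (le_max_left _ _)),
    h₂ fun i hi => hc i (hi.trans_le (le_max_right _ _))⟩ hmemC

/-- Parameters for basic sets: a bound and a function on the initial segment below it. -/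
abbrev Par (κ : Cardinal) := Σ b : T κ, (Set.Iio b → T κ)

/-- The basic open set coded by a parameter. -/
def half {κ : Cardinal} (p : Par κ) : Set (GBS κ) :=
  {f | ∀ i (h : i < p.1), f i = p.2 ⟨i, h⟩}

lemma half_basic {κ : Cardinal} (p : Par κ) : half p ∈ GBaireBasic κ := by
  classical
  refine ⟨p.1, fun i => if h : i < p.1 then p.2 ⟨i, h⟩ else i, ?_⟩
  ext f
  constructor
  · intro hf i hi
    simp only [dif_pos hi]; exact hf i hi
  · intro hf i hi
    have := hf i hi
    simpa only [dif_pos hi] using this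

lemma isOpen_half {κ : Cardinal} (p : Par κ) : IsOpen[gbTop κ] (half p) :=
  TopologicalSpace.isOpen_generateFrom_of_mem (half_basic p)

/-- The basic box coded by a pair of parameters. -/
def Box {κ : Cardinal} (p q : Par κ) : Set (GBS κ × GBS κ) :=
  half p ×ˢ half q

lemma mk_Par_le {κ : Cardinal} (hκ : ℵ₀ ≤ κ) (h : κ ^< κ = κ) : #(Par κ) ≤ κ := by
  have hT : #(T κ) = κ := by rw [Cardinal.mk_toType, Cardinal.card_ord]
  calc #(Par κ) = Cardinal.sum fun b : T κ => #(Set.Iio b → T κ) := Cardinal.mk_sigma _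
    _ ≤ Cardinal.sum fun _ : T κ => κ := by
        apply Cardinal.sum_le_sum
        intro b
        rw [← Cardinal.power_def, hT]
        calc κ ^ #(Set.Iio b) ≤ κ ^< κ := Cardinal.le_powerlt κ (Cardinal.mk_Iio_ord_toType b)
          _ = κ := h
    _ = #(T κ) * κ := Cardinal.sum_const' _ _
    _ = κ := by rw [hT, Cardinal.mul_eq_self hκ]

end Stmt15Aux

open Stmt15Aux in
/-- `Δ¹₁(κ) ≠ Σ¹₁(κ)`: there is a `Σ¹₁(κ)` set whose complement is not `Σ¹₁(κ)`. -/
theorem stmt_15 (κ : Cardinal) (hκ : ℵ₀ ≤ κ) (h : κ ^< κ = κ) :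
    ∃ A : Set (GBS κ), IsSigma11 κ A ∧ ¬ IsSigma11 κ Aᶜ := by
  classical
  letI := gbTop κ
  haveI hinf : Infinite (T κ) := by
    rw [Cardinal.infinite_iff, Cardinal.mk_toType, Cardinal.card_ord]; exact hκ
  haveI : NoMaxOrder (T κ) := Cardinal.noMaxOrder hκ
  -- a surjective enumeration of pairs of parameters
  obtain ⟨e, he⟩ : ∃ e : T κ → Par κ × Par κ, Function.Surjective e := by
    have hle : #(Par κ × Par κ) ≤ #(T κ) := by
      have hT : #(T κ) = κ := by rw [Cardinal.mk_toType, Cardinal.card_ord]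
      rw [hT]
      calc #(Par κ × Par κ) = #(Par κ) * #(Par κ) := by
            rw [Cardinal.mk_prod, Cardinal.lift_id (#(Par κ))]
        _ ≤ κ * κ := mul_le_mul' (mk_Par_le hκ h) (mk_Par_le hκ h)
        _ = κ := Cardinal.mul_eq_self hκ
    obtain ⟨f⟩ := Cardinal.le_def _ _ |>.mp hle
    obtain ⟨b₀⟩ : Nonempty (T κ) := hinf.nonempty
    haveI : Nonempty (Par κ × Par κ) :=
      ⟨⟨⟨b₀, fun j => j.1⟩, ⟨b₀, fun j => j.1⟩⟩⟩
    exact ⟨Function.invFun f, fun p => ⟨f p, Function.leftInverse_invFun f.injective p⟩⟩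
  obtain ⟨z₀, z₁, hz⟩ := exists_pair_ne (T κ)
  -- the closed set coded by `x`
  set Cc : GBS κ → Set (GBS κ × GBS κ) :=
    fun x => {q | ∀ i, x i ≠ z₀ → q ∉ Box (e i).1 (e i).2} with hCc
  -- every closed set is coded
  have code_surj : ∀ C : Set (GBS κ × GBS κ), IsClosed C → ∃ x, Cc x = C := by
    intro C hC
    refine ⟨fun i => if Disjoint (Box (e i).1 (e i).2) C then z₁ else z₀, ?_⟩
    apply Set.Subset.antisymm
    · intro q hq
      by_contra hqC
      obtain ⟨b, hb⟩ := closed_char hκ hC hqC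
      obtain ⟨i, hi⟩ := he (⟨b, fun j => q.1 j.1⟩, ⟨b, fun j => q.2 j.1⟩)
      have hbox : Box (e i).1 (e i).2 = Nb b q.1 ×ˢ Nb b q.2 := by
        rw [hi]; rfl
      have hxi : (if Disjoint (Box (e i).1 (e i).2) C then z₁ else z₀) = z₁ :=
        if_pos (by rw [hbox]; exact hb)
      refine hq i (fun hcon => hz (hxi.symm.trans hcon).symm) ?_
      rw [hbox]
      exact ⟨self_mem_Nb b q.1, self_mem_Nb b q.2⟩
    · intro q hq i hxi
      have hdisj : Disjoint (Box (e i).1 (e i).2) C := by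
        by_contra hnd
        exact hxi (if_neg hnd)
      exact fun hqb => Set.disjoint_left.mp hdisj hqb hq
  -- the diagonal closed set
  set D : Set (GBS κ × GBS κ) := {q | q ∈ Cc q.1} with hD
  have hDclosed : IsClosed D := by
    rw [← isOpen_compl_iff]
    have hcompl : Dᶜ = ⋃ i : T κ,
        ((Prod.fst ⁻¹' {x : GBS κ | x i ≠ z₀}) ∩ Box (e i).1 (e i).2) := by
      ext q
      simp only [hD, hCc, Set.mem_compl_iff, Set.mem_setOf_eq, Set.mem_iUnion,
        Set.mem_inter_iff, Set.mem_preimage]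
      push_neg
      rfl
    rw [hcompl]
    apply isOpen_iUnion
    intro i
    apply IsOpen.inter
    · apply IsOpen.preimage
      · exact continuous_fst
      · rw [isOpen_iff hκ]
        intro x hx
        obtain ⟨b, hb⟩ := exists_gt i
        exact ⟨b, fun f hf => by
          have : f i = x i := hf i hb
          simpa [this] using hx⟩
    · exact (isOpen_half (e i).1).prod (isOpen_half (e i).2)
  -- membership in the first projection
  have hmem : ∀ (S : Set (GBS κ × GBS κ)) (x : GBS κ),
      x ∈ Prod.fst '' S ↔ ∃ z, (x, z) ∈ S := by
    intro S x
    constructor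
    · rintro ⟨⟨a, z⟩, hs, rfl⟩; exact ⟨z, hs⟩
    · rintro ⟨z, hs⟩; exact ⟨(x, z), hs, rfl⟩
  refine ⟨Prod.fst '' D, ⟨D, hDclosed, rfl⟩, ?_⟩
  rintro ⟨C, hC, hEq⟩
  obtain ⟨x₀, hx₀⟩ := code_surj C hC
  have hiff : x₀ ∈ (Prod.fst '' D)ᶜ ↔ x₀ ∈ Prod.fst '' D := by
    rw [hEq, ← hx₀]
    rw [hmem (Cc x₀) x₀, hmem D x₀]
    constructor
    · rintro ⟨z, hz'⟩; exact ⟨z, hz'⟩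
    · rintro ⟨z, hz'⟩; exact ⟨z, hz'⟩
  by_cases hcase : x₀ ∈ Prod.fst '' D
  · exact hiff.mpr hcase hcase
  · exact hcase (hiff.mp hcase)
end
end

section
/- Assume κ^{<κ} = κ. Every set in Borel*_ω(κ), i.e. coded by a well-founded Borel*-code, is Borel(κ); conversely every Borel(κ) set has a Borel*_ω(κ)-code. Hence Borel(κ) = Borel*_ω(κ). -/
open Cardinal Ordinal Set Topology
noncomputable section

/-- A leaf of a tree: a maximal element. -/
def IsLeaf {T : Type} [PartialOrder T] (x : T) : Prop := ¬ ∃ y, x < y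

/-- `(T, u, f)` is a `Borel*`-code whose tree has no chains of length `lam`:
`T` has size `≤ κ`, all chains have cardinality `< lam`, `T` is a tree
(well-founded with linearly ordered sets of predecessors) with a root, every
nonempty chain has a (unique) supremum (closedness), and leaves are labelled
by basic open sets (`u` labels the interior nodes: `true` = `∪`, `false` = `∩`). -/
def BSCode (κ lam : Cardinal) (T : Type) [PartialOrder T]
    (u : T → Bool) (f : T → Set (GBS κ)) : Prop :=
  Cardinal.mk T ≤ κ ∧
  (∀ c : Set T, IsChain (· ≤ ·) c → Cardinal.mk c < lam) ∧
  WellFoundedLT T ∧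
  (∀ x : T, IsChain (· ≤ ·) (Set.Iio x)) ∧
  (∀ c : Set T, IsChain (· ≤ ·) c → c.Nonempty → ∃ y, IsLUB c y) ∧
  (∃ r : T, ∀ x, r ≤ x) ∧
  (∀ x : T, IsLeaf x → f x ∈ GBaireBasic κ)

/-- A (positional) strategy of player II picks an immediate successor at each
non-leaf `∪`-node. -/
def ValidStrat {T : Type} [PartialOrder T] (u : T → Bool) (s : T → T) : Prop :=
  ∀ x, ¬ IsLeaf x → u x = true → x ⋖ s x

/-- `P` is (the set of positions of) a play of the `Borel*`-game consistent with
the strategy `s` of player II: a chain starting at the root, proceeding to an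
immediate successor at each step (chosen by `s` at `∪`-nodes) and to the unique
supremum of the earlier moves at limits. -/
def IsPlay {T : Type} [PartialOrder T] (u : T → Bool) (s : T → T) (P : Set T) : Prop :=
  IsChain (· ≤ ·) P ∧
  (∀ r : T, (∀ z, r ≤ z) → r ∈ P) ∧
  (∀ x ∈ P, ∀ y ∈ P, x < y → (∀ z ∈ P, z ≤ x ∨ y ≤ z) →
      x ⋖ y ∧ (u x = true → y = s x)) ∧
  (∀ x ∈ P, (∃ z ∈ P, z < x) →
      (∀ z ∈ P, z < x → ∃ w ∈ P, z < w ∧ w < x) →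
      IsLUB {z | z ∈ P ∧ z < x} x)

/-- `s` is a winning strategy for player II in `B*(η, (T, u, f))`: whenever a
play consistent with `s` reaches a leaf `x`, we have `η ∈ f x`. -/
def IIWinsBStar (κ : Cardinal) {T : Type} [PartialOrder T]
    (u : T → Bool) (s : T → T) (f : T → Set (GBS κ)) (η : GBS κ) : Prop :=
  ValidStrat u s ∧ ∀ P, IsPlay u s P → ∀ x ∈ P, IsLeaf x → η ∈ f x

/-- `X` is coded by the `Borel*`-code `(T, u, f)`. -/
def IsBorelStarAux (κ lam : Cardinal) (T : Type) [PartialOrder T]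
    (u : T → Bool) (f : T → Set (GBS κ)) (X : Set (GBS κ)) : Prop :=
  BSCode κ lam T u f ∧ ∀ η, η ∈ X ↔ ∃ s : T → T, IIWinsBStar κ u s f η

/-- `X ⊆ κ^κ` is `Borel*_lam(κ)`; `Borel*(κ)` is the case `lam = κ` and
`Borel*_ω(κ)` (well-founded codes) is the case `lam = ℵ₀`. -/
def IsBorelStar (κ lam : Cardinal) (X : Set (GBS κ)) : Prop :=
  ∃ (T : Type) (inst : PartialOrder T) (u : T → Bool) (f : T → Set (GBS κ)),
    @IsBorelStarAux κ lam T inst u f X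

namespace BS16

variable {κ : Cardinal} {T : Type} [PartialOrder T]

/-- The pair (successor) condition of `IsPlay`. -/
def PairCond (u : T → Bool) (s : T → T) (P : Set T) : Prop :=
  ∀ x ∈ P, ∀ y ∈ P, x < y → (∀ z ∈ P, z ≤ x ∨ y ≤ z) →
      x ⋖ y ∧ (u x = true → y = s x)

/-- A play of the subgame starting at `x`. -/
def PlayFrom (u : T → Bool) (s : T → T) (x : T) (P : Set T) : Prop :=
  IsChain (· ≤ ·) P ∧ x ∈ P ∧ (∀ z ∈ P, x ≤ z) ∧ PairCond u s P

def Wins (κ : Cardinal) (u : T → Bool) (s : T → T) (f : T → Set (GBS κ))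
    (x : T) (η : GBS κ) : Prop :=
  ∀ P, PlayFrom u s x P → ∀ y ∈ P, IsLeaf y → η ∈ f y

lemma no_chain_seq (hfin : ∀ c : Set T, IsChain (· ≤ ·) c → c.Finite)
    {g : ℕ → T} (hg : StrictMono g ∨ StrictAnti g) : False := by
  have hinj : Function.Injective g := by
    rcases hg with h | h
    · exact h.injective
    · exact h.injective
  have hchain : IsChain (· ≤ ·) (Set.range g) := by
    rintro _ ⟨a, rfl⟩ _ ⟨b, rfl⟩ hne
    rcases lt_trichotomy a b with hab | hab | hab
    · rcases hg with h | h
      · exact Or.inl (h hab).le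
      · exact Or.inr (h hab).le
    · exact absurd (congrArg g hab) hne
    · rcases hg with h | h
      · exact Or.inr (h hab).le
      · exact Or.inl (h hab).le
  exact Set.infinite_range_of_injective hinj (hfin _ hchain)

lemma wf_lt_of_fin (hfin : ∀ c : Set T, IsChain (· ≤ ·) c → c.Finite) :
    WellFounded ((· < ·) : T → T → Prop) := by
  rw [RelEmbedding.wellFounded_iff_isEmpty]
  constructor
  intro f
  exact no_chain_seq hfin (g := fun n => f n)
    (Or.inr fun a b hab => f.map_rel_iff.2 (show b > a from hab))

lemma wf_gt_of_fin (hfin : ∀ c : Set T, IsChain (· ≤ ·) c → c.Finite) :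
    WellFounded (fun a b : T => b < a) := by
  rw [RelEmbedding.wellFounded_iff_isEmpty]
  constructor
  intro f
  exact no_chain_seq hfin (g := fun n => f n)
    (Or.inl fun a b hab => f.map_rel_iff.2 (show b > a from hab))

lemma exists_cov (hfin : ∀ c : Set T, IsChain (· ≤ ·) c → c.Finite)
    {x : T} (hx : ¬ IsLeaf x) : ∃ y, x ⋖ y := by
  rw [IsLeaf, not_not] at hx
  obtain ⟨m, hm, hmin⟩ := (wf_lt_of_fin hfin).has_min {z | x < z} hx
  exact ⟨m, hm, fun c hc hcm => hmin c hc hcm⟩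

lemma exists_validStrat (hfin : ∀ c : Set T, IsChain (· ≤ ·) c → c.Finite)
    (u : T → Bool) : ∃ s : T → T, ValidStrat u s := by
  classical
  refine ⟨fun x => if h : ∃ y, x ⋖ y then h.choose else x, fun x hx _ => ?_⟩
  simp only [dif_pos (exists_cov hfin hx)]
  exact (exists_cov hfin hx).choose_spec

lemma play_congr {u : T → Bool} {s s' : T → T} {x : T} {P : Set T}
    (hP : PlayFrom u s x P) (hss : ∀ a ∈ P, s a = s' a) : PlayFrom u s' x P := by
  refine ⟨hP.1, hP.2.1, hP.2.2.1, fun a ha b hb hab hside => ?_⟩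
  obtain ⟨h1, h2⟩ := hP.2.2.2 a ha b hb hab hside
  exact ⟨h1, fun hu => (h2 hu).trans (hss a ha)⟩

lemma play_singleton (u : T → Bool) (s : T → T) (x : T) :
    PlayFrom u s x {x} := by
  refine ⟨Set.Subsingleton.isChain (Set.subsingleton_singleton), rfl, ?_, ?_⟩
  · rintro z rfl; exact le_rfl
  · rintro a rfl b rfl hab
    exact absurd hab (lt_irrefl _)

lemma play_step (hfin : ∀ c : Set T, IsChain (· ≤ ·) c → c.Finite)
    {u : T → Bool} {s : T → T} {x : T} {P : Set T}
    (hP : PlayFrom u s x P) (hne : P ≠ {x}) :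
    ∃ y, x ⋖ y ∧ (u x = true → y = s x) ∧ (∀ z ∈ P \ {x}, y ≤ z) ∧
      PlayFrom u s y (P \ {x}) := by
  have hSne : (P \ {x}).Nonempty := by
    rcases Set.eq_singleton_iff_nonempty_unique_mem.not.1 hne with h
    by_contra hcon
    rw [Set.not_nonempty_iff_eq_empty, Set.diff_eq_empty] at hcon
    exact h ⟨⟨x, hP.2.1⟩, fun z hz => hcon hz⟩
  obtain ⟨y, hy, hymin⟩ := (wf_lt_of_fin hfin).has_min _ hSne
  have hylb : ∀ z ∈ P \ {x}, y ≤ z := by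
    intro z hz
    rcases eq_or_ne z y with rfl | hzy
    · exact le_rfl
    rcases hP.1 hz.1 hy.1 hzy with h | h
    · exact absurd (lt_of_le_of_ne h hzy) (hymin z hz)
    · exact h
  have hxy : x < y := lt_of_le_of_ne (hP.2.2.1 y hy.1) (fun h => hy.2 h.symm)
  have hside : ∀ z ∈ P, z ≤ x ∨ y ≤ z := by
    intro z hz
    rcases eq_or_ne z x with rfl | hzx
    · exact Or.inl le_rfl
    · exact Or.inr (hylb z ⟨hz, hzx⟩)
  obtain ⟨hcov, hs⟩ := hP.2.2.2 x hP.2.1 y hy.1 hxy hside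
  refine ⟨y, hcov, hs, hylb, ⟨hP.1.mono Set.diff_subset, hy, hylb,
    fun a ha b hb hab hside' => ?_⟩⟩
  refine hP.2.2.2 a ha.1 b hb.1 hab (fun z hz => ?_)
  rcases eq_or_ne z x with rfl | hzx
  · exact Or.inl (hP.2.2.1 a ha.1)
  · exact hside' z ⟨hz, hzx⟩

lemma play_lift {u : T → Bool} {s : T → T} {x y : T} {Q : Set T}
    (hxy : x ⋖ y) (hs : u x = true → y = s x) (hQ : PlayFrom u s y Q) :
    PlayFrom u s x (insert x Q) := by
  have hlb : ∀ z ∈ insert x Q, x ≤ z := by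
    rintro z (rfl | hz)
    · exact le_rfl
    · exact hxy.lt.le.trans (hQ.2.2.1 z hz)
  have hxQ : x ∉ Q := fun h => absurd (hQ.2.2.1 x h) (not_le_of_gt hxy.lt)
  refine ⟨?_, Set.mem_insert _ _, hlb, ?_⟩
  · intro a ha b hb hne
    rcases ha with rfl | ha
    · exact Or.inl (hlb b hb)
    rcases hb with rfl | hb
    · exact Or.inr (hlb a (Set.mem_insert_of_mem _ ha))
    · exact hQ.1 ha hb hne
  · intro a ha b hb hab hside
    rcases ha with rfl | ha
    · have hbQ : b ∈ Q := by
        rcases hb with rfl | hb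
        · exact absurd hab (lt_irrefl _)
        · exact hb
      have hby : b = y := by
        rcases hside y (Set.mem_insert_of_mem _ hQ.2.1) with h | h
        · exact absurd (h.trans_lt hxy.lt) (lt_irrefl _)
        · exact le_antisymm h (hQ.2.2.1 b hbQ)
      subst hby
      exact ⟨hxy, hs⟩
    rcases hb with rfl | hb
    · exact absurd (lt_of_le_of_lt (hQ.2.2.1 a ha) hab) (absurd hxy.lt ∘ asymm)
    · refine hQ.2.2.2 a ha b hb hab (fun z hz => hside z (Set.mem_insert_of_mem _ hz))

lemma win_leaf (hfin : ∀ c : Set T, IsChain (· ≤ ·) c → c.Finite)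
    {u : T → Bool} {f : T → Set (GBS κ)} {x : T} (hx : IsLeaf x) (η : GBS κ) :
    (∃ s, ValidStrat u s ∧ Wins κ u s f x η) ↔ η ∈ f x := by
  constructor
  · rintro ⟨s, _, hw⟩
    exact hw {x} (play_singleton u s x) x rfl hx
  · intro hη
    obtain ⟨s, hs⟩ := exists_validStrat hfin u
    refine ⟨s, hs, fun P hP y hy hyl => ?_⟩
    have : y = x := by
      rcases eq_or_ne y x with h | h
      · exact h
      · exact absurd ⟨y, lt_of_le_of_ne (hP.2.2.1 y hy) (Ne.symm h)⟩ hx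
    rwa [this]

lemma win_union (hfin : ∀ c : Set T, IsChain (· ≤ ·) c → c.Finite)
    {u : T → Bool} {f : T → Set (GBS κ)} {x : T} (hx : ¬ IsLeaf x)
    (hux : u x = true) (η : GBS κ) :
    (∃ s, ValidStrat u s ∧ Wins κ u s f x η) ↔
      ∃ y, x ⋖ y ∧ (∃ s, ValidStrat u s ∧ Wins κ u s f y η) := by
  constructor
  · rintro ⟨s, hv, hw⟩
    refine ⟨s x, hv x hx hux, s, hv, fun Q hQ z hz hzl => ?_⟩
    exact hw (insert x Q) (play_lift (hv x hx hux) (fun _ => rfl) hQ) z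
      (Set.mem_insert_of_mem _ hz) hzl
  · rintro ⟨y, hcov, s1, hv1, hw1⟩
    classical
    refine ⟨fun z => if z = x then y else s1 z, ?_, ?_⟩
    · intro z hz huz
      rcases eq_or_ne z x with rfl | hne
      · simpa using hcov
      · simpa [hne] using hv1 z hz huz
    · intro P hP ℓ hℓ hℓl
      rcases eq_or_ne P {x} with rfl | hPne
      · exact absurd hℓ.symm (fun h => hx (h ▸ hℓl))
      obtain ⟨m, hmcov, hms, hmlb, hmP⟩ := play_step hfin hP hPne
      have hmy : m = y := by simpa using hms hux
      have hP' : PlayFrom u s1 m (P \ {x}) := by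
        refine play_congr hmP (fun a ha => ?_)
        have hax : a ≠ x := ha.2
        simp [hax]
      rw [hmy] at hP'
      have hℓx : ℓ ≠ x := fun h => hx (h ▸ hℓl)
      exact hw1 (P \ {x}) hP' ℓ ⟨hℓ, hℓx⟩ hℓl

lemma cov_unique {x y₁ y₂ z : T} (hIio : ∀ w : T, IsChain (· ≤ ·) (Set.Iio w))
    (h1 : x ⋖ y₁) (h2 : x ⋖ y₂) (hz1 : y₁ ≤ z) (hz2 : y₂ ≤ z) : y₁ = y₂ := by
  rcases eq_or_ne y₁ y₂ with h | hne
  · exact h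
  exfalso
  rcases eq_or_lt_of_le hz1 with rfl | hlt1
  · exact h1.2 h2.lt (hz2.lt_of_ne hne.symm)
  rcases eq_or_lt_of_le hz2 with rfl | hlt2
  · exact h2.2 h1.lt hlt1
  rcases hIio z hlt1 hlt2 hne with h | h
  · exact h2.2 h1.lt (h.lt_of_ne hne)
  · exact h1.2 h2.lt (h.lt_of_ne hne.symm)

lemma win_inter (hfin : ∀ c : Set T, IsChain (· ≤ ·) c → c.Finite)
    (hIio : ∀ w : T, IsChain (· ≤ ·) (Set.Iio w))
    {u : T → Bool} {f : T → Set (GBS κ)} {x : T} (hx : ¬ IsLeaf x)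
    (hux : u x = false) (η : GBS κ) :
    (∃ s, ValidStrat u s ∧ Wins κ u s f x η) ↔
      ∀ y, x ⋖ y → (∃ s, ValidStrat u s ∧ Wins κ u s f y η) := by
  constructor
  · rintro ⟨s, hv, hw⟩ y hcov
    refine ⟨s, hv, fun Q hQ z hz hzl => ?_⟩
    refine hw (insert x Q) (play_lift hcov (fun h => ?_) hQ) z
      (Set.mem_insert_of_mem _ hz) hzl
    rw [hux] at h; exact absurd h (by simp)
  · intro hall
    have h' : ∀ y : {y // x ⋖ y}, ∃ s, ValidStrat u s ∧ Wins κ u s f y.1 η :=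
      fun y => hall y.1 y.2
    choose σ hσv hσw using h'
    obtain ⟨s₀, hs₀⟩ := exists_validStrat hfin u
    classical
    refine ⟨fun z => if hz : ∃ y : {y // x ⋖ y}, y.1 ≤ z then σ hz.choose z else s₀ z,
      ?_, ?_⟩
    · intro z hz huz
      by_cases hez : ∃ y : {y // x ⋖ y}, y.1 ≤ z
      · show z ⋖ if hz' : ∃ y : {y // x ⋖ y}, y.1 ≤ z then σ hz'.choose z else s₀ z
        rw [dif_pos hez]; exact hσv hez.choose z hz huz
      · show z ⋖ if hz' : ∃ y : {y // x ⋖ y}, y.1 ≤ z then σ hz'.choose z else s₀ z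
        rw [dif_neg hez]; exact hs₀ z hz huz
    · intro P hP ℓ hℓ hℓl
      rcases eq_or_ne P {x} with rfl | hPne
      · exact absurd hℓ.symm (fun h => hx (h ▸ hℓl))
      obtain ⟨m, hmcov, _, hmlb, hmP⟩ := play_step hfin hP hPne
      have hP' : PlayFrom u (σ ⟨m, hmcov⟩) m (P \ {x}) := by
        refine play_congr hmP (fun a ha => ?_)
        have hez : ∃ y : {y // x ⋖ y}, y.1 ≤ a := ⟨⟨m, hmcov⟩, hmlb a ha⟩
        have heq : hez.choose = ⟨m, hmcov⟩ := by
          apply Subtype.ext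
          exact cov_unique hIio hez.choose.2 hmcov hez.choose_spec (hmlb a ha)
        show (if hz' : ∃ y : {y // x ⋖ y}, y.1 ≤ a then σ hz'.choose a else s₀ a) = _
        rw [dif_pos hez, heq]
      have hℓx : ℓ ≠ x := fun h => hx (h ▸ hℓl)
      exact hσw ⟨m, hmcov⟩ (P \ {x}) hP' ℓ ⟨hℓ, hℓx⟩ hℓl

lemma isPlay_iff_playFrom (hfin : ∀ c : Set T, IsChain (· ≤ ·) c → c.Finite)
    {u : T → Bool} {s : T → T} {r : T} (hr : ∀ z, r ≤ z) (P : Set T) :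
    IsPlay u s P ↔ PlayFrom u s r P := by
  constructor
  · rintro ⟨h1, h2, h3, _⟩
    exact ⟨h1, h2 r hr, fun z _ => hr z, h3⟩
  · rintro ⟨h1, h2, h3, h4⟩
    refine ⟨h1, fun r' hr' => ?_, h4, ?_⟩
    · rwa [le_antisymm (hr' r) (hr r')]
    · intro x hx hex hdense
      exfalso
      obtain ⟨m, hm, hmax⟩ := (wf_gt_of_fin hfin).has_min {z | z ∈ P ∧ z < x}
        (by obtain ⟨z, hz1, hz2⟩ := hex; exact ⟨z, hz1, hz2⟩)
      obtain ⟨w, hw, hmw, hwx⟩ := hdense m hm.1 hm.2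
      exact hmax w ⟨hw, hwx⟩ hmw
open Classical in
/-- The Borel set computed from a code by recursion on the (upward) well-founded tree. -/
noncomputable def Bset (u : T → Bool) (f : T → Set (GBS κ))
    (hwf : WellFounded (fun a b : T => b < a)) : T → Set (GBS κ) :=
  hwf.fix (fun x rec =>
    if IsLeaf x then f x
    else if u x = true then ⋃ y : {y // x ⋖ y}, rec y.1 y.2.lt
    else ⋂ y : {y // x ⋖ y}, rec y.1 y.2.lt)

open Classical in
lemma Bset_eq (u : T → Bool) (f : T → Set (GBS κ))
    (hwf : WellFounded (fun a b : T => b < a)) (x : T) :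
    Bset u f hwf x =
      if IsLeaf x then f x
      else if u x = true then ⋃ y : {y // x ⋖ y}, Bset u f hwf y.1
      else ⋂ y : {y // x ⋖ y}, Bset u f hwf y.1 := by
  rw [Bset, WellFounded.fix_eq]

lemma gbBorel_Bset {u : T → Bool} {f : T → Set (GBS κ)}
    (hwf : WellFounded (fun a b : T => b < a))
    (hmk : Cardinal.mk T ≤ κ) (hleaf : ∀ x : T, IsLeaf x → f x ∈ GBaireBasic κ)
    (x : T) : GBBorel κ (Bset u f hwf x) := by
  induction x using hwf.induction with
  | _ x IH =>
    rw [Bset_eq]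
    by_cases hL : IsLeaf x
    · rw [if_pos hL]; exact GBBorel.basic _ (hleaf x hL)
    rw [if_neg hL]
    by_cases hu : u x = true
    · rw [if_pos hu]
      exact GBBorel.iUnion _ _ ((Cardinal.mk_subtype_le _).trans hmk)
        (fun y => IH y.1 y.2.lt)
    · rw [if_neg hu]
      exact GBBorel.iInter _ _ ((Cardinal.mk_subtype_le _).trans hmk)
        (fun y => IH y.1 y.2.lt)

lemma win_iff_Bset (hfin : ∀ c : Set T, IsChain (· ≤ ·) c → c.Finite)
    (hIio : ∀ w : T, IsChain (· ≤ ·) (Set.Iio w))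
    {u : T → Bool} {f : T → Set (GBS κ)}
    (hwf : WellFounded (fun a b : T => b < a)) (η : GBS κ) (x : T) :
    (∃ s, ValidStrat u s ∧ Wins κ u s f x η) ↔ η ∈ Bset u f hwf x := by
  induction x using hwf.induction with
  | _ x IH =>
    rw [Bset_eq]
    by_cases hL : IsLeaf x
    · rw [if_pos hL]; exact win_leaf hfin hL η
    rw [if_neg hL]
    by_cases hu : u x = true
    · rw [if_pos hu, win_union hfin hL hu η]
      constructor
      · rintro ⟨y, hcov, hw⟩
        exact Set.mem_iUnion.2 ⟨⟨y, hcov⟩, (IH y hcov.lt).1 hw⟩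
      · intro hmem
        obtain ⟨y, hy⟩ := Set.mem_iUnion.1 hmem
        exact ⟨y.1, y.2, (IH y.1 y.2.lt).2 hy⟩
    · rw [if_neg hu, win_inter hfin hIio hL (by simpa using hu) η]
      constructor
      · intro hall
        exact Set.mem_iInter.2 (fun y => (IH y.1 y.2.lt).1 (hall y.1 y.2))
      · intro hmem y hcov
        exact (IH y hcov.lt).2 (Set.mem_iInter.1 hmem ⟨y, hcov⟩)

/-- Master lemma: the set coded by a `Borel*`-code is `Bset` at the root. -/
lemma coded_iff (hfin : ∀ c : Set T, IsChain (· ≤ ·) c → c.Finite)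
    (hIio : ∀ w : T, IsChain (· ≤ ·) (Set.Iio w))
    {u : T → Bool} {f : T → Set (GBS κ)}
    (hwf : WellFounded (fun a b : T => b < a))
    {r : T} (hr : ∀ z, r ≤ z) (η : GBS κ) :
    (∃ s, IIWinsBStar κ u s f η) ↔ η ∈ Bset u f hwf r := by
  rw [← win_iff_Bset hfin hIio hwf η r]
  constructor
  · rintro ⟨s, hv, hw⟩
    exact ⟨s, hv, fun P hP => hw P ((isPlay_iff_playFrom hfin hr P).2 hP)⟩
  · rintro ⟨s, hv, hw⟩
    exact ⟨s, hv, fun P hP => hw P ((isPlay_iff_playFrom hfin hr P).1 hP)⟩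

/-- Extract convenient facts from a `BSCode` with `lam = ℵ₀`. -/
lemma bscode_fin {u : T → Bool} {f : T → Set (GBS κ)}
    (hc : BSCode κ ℵ₀ T u f) : ∀ c : Set T, IsChain (· ≤ ·) c → c.Finite :=
  fun c hchain => (Cardinal.lt_aleph0_iff_set_finite).1 (hc.2.1 c hchain)
lemma univ_mem_basic (hκ : ℵ₀ ≤ κ) : (Set.univ : Set (GBS κ)) ∈ GBaireBasic κ := by
  have hne : Nonempty κ.ord.ToType :=
    Ordinal.toType_nonempty_iff_ne_zero.2 (by
      simp only [ne_eq, Cardinal.ord_eq_zero]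
      rintro rfl
      exact (lt_irrefl _ (lt_of_lt_of_le Cardinal.aleph0_pos hκ)).elim)
  have hbot : OrderBot κ.ord.ToType :=
    Ordinal.toTypeOrderBot
      (Ordinal.toType_nonempty_iff_ne_zero.1 hne)
  refine ⟨hbot.bot, fun i => hbot.bot, ?_⟩
  ext g
  simp only [Set.mem_univ, Set.mem_setOf_eq, true_iff]
  intro i hi
  exact absurd hi (by simpa using hbot.bot_le (a := i))

lemma exists_disjoint_basics (hκ : ℵ₀ ≤ κ) :
    ∃ N₀ N₁ : Set (GBS κ), N₀ ∈ GBaireBasic κ ∧ N₁ ∈ GBaireBasic κ ∧ N₀ ∩ N₁ = ∅ := by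
  have hmk : Cardinal.mk κ.ord.ToType = κ := by
    rw [Cardinal.mk_toType, Cardinal.card_ord]
  have hinf : Infinite κ.ord.ToType := by
    rw [Cardinal.infinite_iff, hmk]; exact hκ
  obtain ⟨a, b, hab⟩ := exists_pair_ne κ.ord.ToType
  wlog hlt : a < b generalizing a b
  · exact this b a hab.symm ((hab.lt_or_gt).resolve_left hlt)
  refine ⟨{g : GBS κ | ∀ i, i < b → g i = (fun _ => a) i},
    {g : GBS κ | ∀ i, i < b → g i = (fun _ => b) i},
    ⟨b, _, rfl⟩, ⟨b, _, rfl⟩, ?_⟩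
  ext g
  simp only [Set.mem_inter_iff, Set.mem_setOf_eq, Set.mem_empty_iff_false, iff_false,
    not_and]
  intro h1 h2
  exact absurd ((h1 a hlt).symm.trans (h2 a hlt)) hab

/-- A one-point code for a basic open set. -/
lemma isBorelStar_basic (hκ : ℵ₀ ≤ κ) {N : Set (GBS κ)} (hN : N ∈ GBaireBasic κ) :
    IsBorelStar κ ℵ₀ N := by
  refine ⟨Fin 1, inferInstance, fun _ => true, fun _ => N, ?_, ?_⟩
  · refine ⟨?_, ?_, ?_, ?_, ?_, ⟨0, fun x => ?_⟩, fun _ _ => hN⟩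
    · simpa using (Cardinal.one_lt_aleph0.le.trans hκ)
    · exact fun c hc => (Set.toFinite c).lt_aleph0
    · exact Finite.to_wellFoundedLT
    · exact fun x => Set.Subsingleton.isChain (Set.subsingleton_of_subsingleton)
    · exact fun c hc hcne => ⟨0, fun z hz => le_of_eq (Subsingleton.elim _ _),
        fun w hw => le_of_eq (Subsingleton.elim _ _)⟩
    · exact le_of_eq (Subsingleton.elim _ _)
  · intro η
    have hfin : ∀ c : Set (Fin 1), IsChain (· ≤ ·) c → c.Finite :=
      fun c _ => Set.toFinite c
    have hIio : ∀ w : Fin 1, IsChain (· ≤ ·) (Set.Iio w) :=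
      fun x => Set.Subsingleton.isChain (Set.subsingleton_of_subsingleton)
    have hwf := wf_gt_of_fin hfin
    have hleaf : IsLeaf (0 : Fin 1) := by
      rintro ⟨y, hy⟩
      exact absurd (Subsingleton.elim (0 : Fin 1) y) hy.ne
    rw [coded_iff hfin hIio hwf (r := 0) (fun z => le_of_eq (Subsingleton.elim _ _)) η,
      Bset_eq, if_pos hleaf]
section Comb

variable {ι : Type} {Tf : ι → Type} [∀ i, PartialOrder (Tf i)]

/-- The interior labelling of the combined tree. -/
def cu (b : Bool) (uf : ∀ i, Tf i → Bool) : WithBot (Σ i, Tf i) → Bool :=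
  WithBot.recBotCoe b (fun p => uf p.1 p.2)

/-- The leaf labelling of the combined tree. -/
def cfn (N : Set (GBS κ)) (ff : ∀ i, Tf i → Set (GBS κ)) :
    WithBot (Σ i, Tf i) → Set (GBS κ) :=
  WithBot.recBotCoe N (fun p => ff p.1 p.2)

lemma ct_cov_coe_iff {p : Σ i, Tf i} {y : WithBot (Σ i, Tf i)} :
    (p : WithBot (Σ i, Tf i)) ⋖ y ↔
      ∃ c : Tf p.1, p.2 ⋖ c ∧ y = ((⟨p.1, c⟩ : Σ i, Tf i) : WithBot (Σ i, Tf i)) := by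
  constructor
  · rintro ⟨hlt, hbet⟩
    obtain ⟨q, rfl, hpq⟩ := WithBot.lt_iff_exists_coe.1 hlt
    rw [WithBot.coe_lt_coe] at hpq
    obtain ⟨h1, h2⟩ := Sigma.lt_def.1 hpq
    obtain ⟨i, a⟩ := p
    obtain ⟨j, c⟩ := q
    dsimp at h1
    subst h1
    dsimp at h2 ⊢
    refine ⟨c, ⟨h2, fun d hd hdc => ?_⟩, rfl⟩
    exact hbet (WithBot.coe_lt_coe.2 (Sigma.mk_lt_mk_iff.2 hd))
      (WithBot.coe_lt_coe.2 (Sigma.mk_lt_mk_iff.2 hdc))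
  · rintro ⟨c, hc, rfl⟩
    obtain ⟨i, a⟩ := p
    refine ⟨WithBot.coe_lt_coe.2 (Sigma.mk_lt_mk_iff.2 hc.lt), ?_⟩
    intro z h1 h2
    obtain ⟨q, rfl, h1'⟩ := WithBot.lt_iff_exists_coe.1 h1
    rw [WithBot.coe_lt_coe] at h1' h2
    obtain ⟨e1, e2⟩ := Sigma.lt_def.1 h1'
    obtain ⟨j, d⟩ := q
    dsimp at e1
    subst e1
    dsimp at e2
    rw [Sigma.mk_lt_mk_iff] at h2
    exact hc.2 e2 h2

lemma ct_cov_bot_iff {rt : ∀ i, Tf i} (hrt : ∀ i x, rt i ≤ x)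
    {y : WithBot (Σ i, Tf i)} :
    (⊥ : WithBot (Σ i, Tf i)) ⋖ y ↔
      ∃ i, y = ((⟨i, rt i⟩ : Σ i, Tf i) : WithBot (Σ i, Tf i)) := by
  constructor
  · rintro ⟨hlt, hbet⟩
    obtain ⟨⟨i, c⟩, rfl, -⟩ := WithBot.lt_iff_exists_coe.1 hlt
    refine ⟨i, ?_⟩
    rw [WithBot.coe_inj]
    rcases eq_or_ne c (rt i) with rfl | hne
    · rfl
    exfalso
    exact hbet (WithBot.bot_lt_coe ((⟨i, rt i⟩ : Σ i, Tf i)))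
      (WithBot.coe_lt_coe.2 (Sigma.mk_lt_mk_iff.2 ((hrt i c).lt_of_ne (Ne.symm hne))))
  · rintro ⟨i, rfl⟩
    refine ⟨WithBot.bot_lt_coe _, ?_⟩
    intro z h1 h2
    obtain ⟨⟨j, d⟩, rfl, -⟩ := WithBot.lt_iff_exists_coe.1 h1
    rw [WithBot.coe_lt_coe] at h2
    obtain ⟨e1, e2⟩ := Sigma.lt_def.1 h2
    dsimp at e1
    subst e1
    exact absurd e2 (not_lt_of_ge (hrt j d))

lemma ct_leaf_coe_iff {p : Σ i, Tf i} :
    IsLeaf ((p : WithBot (Σ i, Tf i))) ↔ IsLeaf p.2 := by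
  rw [IsLeaf, IsLeaf, not_iff_not]
  constructor
  · rintro ⟨y, hy⟩
    obtain ⟨q, rfl, h⟩ := WithBot.lt_iff_exists_coe.1 hy
    rw [WithBot.coe_lt_coe] at h
    obtain ⟨e1, e2⟩ := Sigma.lt_def.1 h
    obtain ⟨i, a⟩ := p
    obtain ⟨j, c⟩ := q
    dsimp at e1
    subst e1
    exact ⟨c, e2⟩
  · rintro ⟨c, hc⟩
    obtain ⟨i, a⟩ := p
    exact ⟨((⟨i, c⟩ : Σ i, Tf i) : WithBot (Σ i, Tf i)),
      WithBot.coe_lt_coe.2 (Sigma.mk_lt_mk_iff.2 hc)⟩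

lemma ct_leaf_bot_iff (hTf : ∀ i, Nonempty (Tf i)) :
    IsLeaf (⊥ : WithBot (Σ i, Tf i)) ↔ IsEmpty ι := by
  rw [IsLeaf]
  constructor
  · intro h
    refine ⟨fun i => ?_⟩
    obtain ⟨a⟩ := hTf i
    exact h ⟨((⟨i, a⟩ : Σ i, Tf i) : WithBot (Σ i, Tf i)), WithBot.bot_lt_coe _⟩
  · rintro hempty ⟨y, hy⟩
    obtain ⟨⟨i, a⟩, rfl, -⟩ := WithBot.lt_iff_exists_coe.1 hy
    exact hempty.false i

end Comb
section Comb2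

lemma sigma_mk_inj {ι : Type} {Tf : ι → Type} {i : ι} {a b : Tf i}
    (h : (⟨i, a⟩ : Σ i, Tf i) = ⟨i, b⟩) : a = b :=
  eq_of_heq (Sigma.mk.inj_iff.1 h).2

variable {κ : Cardinal} {ι : Type} {Tf : ι → Type} [∀ i, PartialOrder (Tf i)]
  {uf : ∀ i, Tf i → Bool} {ff : ∀ i, Tf i → Set (GBS κ)}

lemma comb_chain_fin (hcode : ∀ i, BSCode κ ℵ₀ (Tf i) (uf i) (ff i)) :
    ∀ c : Set (WithBot (Σ i, Tf i)), IsChain (· ≤ ·) c → c.Finite := by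
  intro c hc
  by_cases hne : ∃ p : Σ i, Tf i, (p : WithBot (Σ i, Tf i)) ∈ c
  · obtain ⟨⟨i0, a0⟩, h0⟩ := hne
    have hchain' : IsChain (· ≤ ·) {a : Tf i0 | ((⟨i0, a⟩ : Σ i, Tf i) : WithBot (Σ i, Tf i)) ∈ c} := by
      intro a ha b hb hab
      have h := hc ha hb (fun h => hab (sigma_mk_inj (WithBot.coe_inj.1 h)))
      rcases h with h | h
      · exact Or.inl (Sigma.mk_le_mk_iff.1 (WithBot.coe_le_coe.1 h))
      · exact Or.inr (Sigma.mk_le_mk_iff.1 (WithBot.coe_le_coe.1 h))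
    have hfin' := bscode_fin (hcode i0) _ hchain'
    refine Set.Finite.subset (Set.Finite.insert ⊥ (hfin'.image
      (fun a : Tf i0 => ((⟨i0, a⟩ : Σ i, Tf i) : WithBot (Σ i, Tf i))))) ?_
    intro z hz
    induction z using WithBot.recBotCoe with
    | bot => exact Set.mem_insert _ _
    | coe q =>
      obtain ⟨j, b⟩ := q
      have hji : j = i0 := by
        rcases eq_or_ne ((⟨j, b⟩ : Σ i, Tf i) : WithBot (Σ i, Tf i))
            ((⟨i0, a0⟩ : Σ i, Tf i) : WithBot (Σ i, Tf i)) with h | h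
        · rw [WithBot.coe_inj] at h
          exact (Sigma.mk.inj_iff.1 h).1
        rcases hc hz h0 h with h' | h'
        · exact (Sigma.le_def.1 (WithBot.coe_le_coe.1 h')).1
        · exact (Sigma.le_def.1 (WithBot.coe_le_coe.1 h')).1.symm
      subst hji
      exact Set.mem_insert_of_mem _ ⟨b, hz, rfl⟩
  · refine Set.Finite.subset (Set.finite_singleton ⊥) (fun z hz => ?_)
    induction z using WithBot.recBotCoe with
    | bot => exact rfl
    | coe q => exact absurd ⟨q, hz⟩ hne

lemma comb_code (hκ : ℵ₀ ≤ κ) (hmkι : Cardinal.mk ι ≤ κ) (b : Bool)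
    (hcode : ∀ i, BSCode κ ℵ₀ (Tf i) (uf i) (ff i)) :
    BSCode κ ℵ₀ (WithBot (Σ i, Tf i)) (cu b uf) (cfn Set.univ ff) := by
  have hfinC := comb_chain_fin hcode
  refine ⟨?_, fun c hc => (hfinC c hc).lt_aleph0, ⟨wf_lt_of_fin hfinC⟩, ?_, ?_,
    ⟨⊥, fun x => bot_le⟩, ?_⟩
  · have h1 : Cardinal.mk (WithBot (Σ i, Tf i)) = Cardinal.mk (Σ i, Tf i) + 1 :=
      Cardinal.mk_option
    have h2 : Cardinal.mk (Σ i, Tf i) ≤ κ := by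
      rw [Cardinal.mk_sigma]
      calc (Cardinal.sum fun i => Cardinal.mk (Tf i)) ≤ Cardinal.sum fun _ : ι => κ :=
            Cardinal.sum_le_sum _ _ (fun i => (hcode i).1)
        _ = Cardinal.mk ι * κ := Cardinal.sum_const' _ _
        _ ≤ κ * κ := mul_le_mul_left hmkι κ
        _ = κ := Cardinal.mul_eq_self hκ
    rw [h1]
    calc Cardinal.mk (Σ i, Tf i) + 1 ≤ κ + κ :=
          add_le_add h2 (Cardinal.one_le_aleph0.trans hκ)
      _ = κ := Cardinal.add_eq_self hκ
  · -- Iio is a chain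
    intro x
    induction x using WithBot.recBotCoe with
    | bot =>
      intro y hy
      exact absurd hy (WithBot.not_lt_bot _)
    | coe p =>
      obtain ⟨i, a⟩ := p
      intro y hy z hz hne
      induction y using WithBot.recBotCoe with
      | bot => exact Or.inl bot_le
      | coe q =>
        induction z using WithBot.recBotCoe with
        | bot => exact Or.inr bot_le
        | coe q' =>
          rw [Set.mem_Iio, WithBot.coe_lt_coe] at hy hz
          obtain ⟨e1, e2⟩ := Sigma.lt_def.1 hy
          obtain ⟨e1', e2'⟩ := Sigma.lt_def.1 hz
          obtain ⟨j, c⟩ := q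
          obtain ⟨j', c'⟩ := q'
          dsimp at e1 e1'
          subst e1; subst e1'
          dsimp at e2 e2'
          have hcc : c ≠ c' := fun h => hne (by rw [h])
          rcases (hcode _).2.2.2.1 a e2 e2' hcc with h | h
          · exact Or.inl (WithBot.coe_le_coe.2 (Sigma.mk_le_mk_iff.2 h))
          · exact Or.inr (WithBot.coe_le_coe.2 (Sigma.mk_le_mk_iff.2 h))
  · -- suprema of chains
    intro c hc hcne
    by_cases hex : ∃ p : Σ i, Tf i, (p : WithBot (Σ i, Tf i)) ∈ c
    · obtain ⟨⟨i, a0⟩, h0⟩ := hex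
      have hidx : ∀ (j : ι) (bb : Tf j), ((⟨j, bb⟩ : Σ i, Tf i) : WithBot (Σ i, Tf i)) ∈ c →
          j = i := by
        intro j bb hj
        rcases eq_or_ne ((⟨j, bb⟩ : Σ i, Tf i) : WithBot (Σ i, Tf i))
            ((⟨i, a0⟩ : Σ i, Tf i) : WithBot (Σ i, Tf i)) with h | h
        · rw [WithBot.coe_inj] at h
          exact (Sigma.mk.inj_iff.1 h).1
        rcases hc hj h0 h with h' | h'
        · exact (Sigma.le_def.1 (WithBot.coe_le_coe.1 h')).1
        · exact (Sigma.le_def.1 (WithBot.coe_le_coe.1 h')).1.symm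
      have hchain' : IsChain (· ≤ ·) {a : Tf i | ((⟨i, a⟩ : Σ i, Tf i) : WithBot (Σ i, Tf i)) ∈ c} := by
        intro a ha bb hb hab
        have h := hc ha hb (fun h => hab (sigma_mk_inj (WithBot.coe_inj.1 h)))
        rcases h with h | h
        · exact Or.inl (Sigma.mk_le_mk_iff.1 (WithBot.coe_le_coe.1 h))
        · exact Or.inr (Sigma.mk_le_mk_iff.1 (WithBot.coe_le_coe.1 h))
      obtain ⟨y, hy⟩ := (hcode i).2.2.2.2.1 _ hchain' ⟨a0, h0⟩
      refine ⟨((⟨i, y⟩ : Σ i, Tf i) : WithBot (Σ i, Tf i)), ?_, ?_⟩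
      · intro z hz
        induction z using WithBot.recBotCoe with
        | bot => exact bot_le
        | coe q =>
          obtain ⟨j, bb⟩ := q
          have := hidx j bb hz
          subst this
          exact WithBot.coe_le_coe.2 (Sigma.mk_le_mk_iff.2 (hy.1 hz))
      · intro w hw
        have h0w := hw h0
        induction w using WithBot.recBotCoe with
        | bot => exact absurd h0w (WithBot.not_coe_le_bot _)
        | coe qw =>
          obtain ⟨jw, bw⟩ := qw
          rw [WithBot.coe_le_coe] at h0w
          obtain ⟨e1, -⟩ := Sigma.le_def.1 h0w
          dsimp at e1
          subst e1
          refine WithBot.coe_le_coe.2 (Sigma.mk_le_mk_iff.2 (hy.2 ?_))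
          intro aa haa
          exact Sigma.mk_le_mk_iff.1 (WithBot.coe_le_coe.1 (hw haa))
    · refine ⟨⊥, fun z hz => ?_, fun w _ => bot_le⟩
      induction z using WithBot.recBotCoe with
      | bot => exact le_rfl
      | coe q => exact absurd ⟨q, hz⟩ hex
  · -- leaves are basic
    intro x hx
    induction x using WithBot.recBotCoe with
    | bot => exact univ_mem_basic hκ
    | coe p => exact (hcode p.1).2.2.2.2.2.2 p.2 (ct_leaf_coe_iff.1 hx)

end Comb2
section Comb3

variable {κ : Cardinal} {ι : Type} {Tf : ι → Type} [∀ i, PartialOrder (Tf i)]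
  {uf : ∀ i, Tf i → Bool} {ff : ∀ i, Tf i → Set (GBS κ)}

lemma comb_Bset_coe (hcode : ∀ i, BSCode κ ℵ₀ (Tf i) (uf i) (ff i)) (b : Bool)
    (hwfC : WellFounded (fun a b : WithBot (Σ i, Tf i) => b < a))
    (hwf : ∀ i, WellFounded (fun a b : Tf i => b < a)) :
    ∀ p : Σ i, Tf i,
      Bset (cu b uf) (cfn Set.univ ff) hwfC (p : WithBot (Σ i, Tf i)) =
        Bset (uf p.1) (ff p.1) (hwf p.1) p.2 := by
  have main : ∀ z : WithBot (Σ i, Tf i), ∀ p : Σ i, Tf i,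
      z = (p : WithBot (Σ i, Tf i)) →
      Bset (cu b uf) (cfn Set.univ ff) hwfC z =
        Bset (uf p.1) (ff p.1) (hwf p.1) p.2 := by
    intro z
    induction z using hwfC.induction with
    | _ z IH =>
      rintro ⟨i, a⟩ rfl
      rw [Bset_eq, Bset_eq]
      by_cases hL : IsLeaf a
      · rw [if_pos (ct_leaf_coe_iff.2 hL), if_pos hL]; rfl
      rw [if_neg (fun h => hL (ct_leaf_coe_iff.1 h)), if_neg hL]
      have hcu : cu b uf ((⟨i, a⟩ : Σ i, Tf i) : WithBot (Σ i, Tf i)) = uf i a := rfl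
      rw [hcu]
      by_cases hu : uf i a = true
      · rw [if_pos hu, if_pos hu]
        ext η
        simp only [Set.mem_iUnion]
        constructor
        · rintro ⟨⟨y, hy⟩, hη⟩
          obtain ⟨c, hc, rfl⟩ := ct_cov_coe_iff.1 hy
          exact ⟨⟨c, hc⟩, by rw [← IH _ hy.lt ⟨i, c⟩ rfl]; exact hη⟩
        · rintro ⟨⟨c, hc⟩, hη⟩
          have hy : ((⟨i, a⟩ : Σ i, Tf i) : WithBot (Σ i, Tf i)) ⋖
              ((⟨i, c⟩ : Σ i, Tf i) : WithBot (Σ i, Tf i)) :=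
            ct_cov_coe_iff.2 ⟨c, hc, rfl⟩
          exact ⟨⟨_, hy⟩, by rw [IH _ hy.lt ⟨i, c⟩ rfl]; exact hη⟩
      · rw [if_neg hu, if_neg hu]
        ext η
        simp only [Set.mem_iInter]
        constructor
        · rintro hall ⟨c, hc⟩
          have hy : ((⟨i, a⟩ : Σ i, Tf i) : WithBot (Σ i, Tf i)) ⋖
              ((⟨i, c⟩ : Σ i, Tf i) : WithBot (Σ i, Tf i)) :=
            ct_cov_coe_iff.2 ⟨c, hc, rfl⟩
          have := hall ⟨_, hy⟩
          rwa [IH _ hy.lt ⟨i, c⟩ rfl] at this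
        · rintro hall ⟨y, hy⟩
          obtain ⟨c, hc, rfl⟩ := ct_cov_coe_iff.1 hy
          rw [IH _ hy.lt ⟨i, c⟩ rfl]
          exact hall ⟨c, hc⟩
  intro p
  exact main _ p rfl

lemma comb_Bset_bot_empty (b : Bool)
    (hwfC : WellFounded (fun a b : WithBot (Σ i, Tf i) => b < a))
    (rt : ∀ i, Tf i) (hι : IsEmpty ι) :
    Bset (cu b uf) (cfn Set.univ ff) hwfC (⊥ : WithBot (Σ i, Tf i)) = Set.univ := by
  rw [Bset_eq, if_pos ((ct_leaf_bot_iff (fun i => ⟨rt i⟩)).2 hι)]; rfl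

lemma comb_Bset_bot_nonempty (hcode : ∀ i, BSCode κ ℵ₀ (Tf i) (uf i) (ff i)) (b : Bool)
    (hwfC : WellFounded (fun a b : WithBot (Σ i, Tf i) => b < a))
    (hwf : ∀ i, WellFounded (fun a b : Tf i => b < a))
    (rt : ∀ i, Tf i) (hrt : ∀ i x, rt i ≤ x) (hι : Nonempty ι) :
    Bset (cu b uf) (cfn Set.univ ff) hwfC (⊥ : WithBot (Σ i, Tf i)) =
      if b = true then ⋃ i, Bset (uf i) (ff i) (hwf i) (rt i)
      else ⋂ i, Bset (uf i) (ff i) (hwf i) (rt i) := by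
  have hnl : ¬ IsLeaf (⊥ : WithBot (Σ i, Tf i)) :=
    fun h => ((ct_leaf_bot_iff (fun i => ⟨rt i⟩)).1 h).false hι.some
  rw [Bset_eq, if_neg hnl]
  have hcu : cu b uf (⊥ : WithBot (Σ i, Tf i)) = b := rfl
  rw [hcu]
  by_cases hb : b = true
  · rw [if_pos hb, if_pos hb]
    ext η
    simp only [Set.mem_iUnion]
    constructor
    · rintro ⟨⟨y, hy⟩, hη⟩
      obtain ⟨i, rfl⟩ := (ct_cov_bot_iff hrt).1 hy
      rw [comb_Bset_coe hcode b hwfC hwf ⟨i, rt i⟩] at hη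
      exact ⟨i, hη⟩
    · rintro ⟨i, hη⟩
      have hy : (⊥ : WithBot (Σ i, Tf i)) ⋖ ((⟨i, rt i⟩ : Σ i, Tf i) : WithBot (Σ i, Tf i)) :=
        (ct_cov_bot_iff hrt).2 ⟨i, rfl⟩
      exact ⟨⟨_, hy⟩, by rw [comb_Bset_coe hcode b hwfC hwf ⟨i, rt i⟩]; exact hη⟩
  · rw [if_neg hb, if_neg hb]
    ext η
    simp only [Set.mem_iInter]
    constructor
    · rintro hall i
      have hy : (⊥ : WithBot (Σ i, Tf i)) ⋖ ((⟨i, rt i⟩ : Σ i, Tf i) : WithBot (Σ i, Tf i)) :=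
        (ct_cov_bot_iff hrt).2 ⟨i, rfl⟩
      have := hall ⟨_, hy⟩
      rwa [comb_Bset_coe hcode b hwfC hwf ⟨i, rt i⟩] at this
    · rintro hall ⟨y, hy⟩
      obtain ⟨i, rfl⟩ := (ct_cov_bot_iff hrt).1 hy
      rw [comb_Bset_coe hcode b hwfC hwf ⟨i, rt i⟩]
      exact hall i

lemma comb_main (hκ : ℵ₀ ≤ κ) (hmkι : Cardinal.mk ι ≤ κ) (b : Bool)
    (hcode : ∀ i, BSCode κ ℵ₀ (Tf i) (uf i) (ff i))
    (rt : ∀ i, Tf i) (hrt : ∀ i x, rt i ≤ x)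
    (hbι : b = true → Nonempty ι)
    (Af : ι → Set (GBS κ))
    (hA : ∀ i η, η ∈ Af i ↔ ∃ s, IIWinsBStar κ (uf i) s (ff i) η) :
    ∀ η, (∃ s, IIWinsBStar κ (cu b uf) s (cfn Set.univ ff) η) ↔
      (if b = true then ∃ i, η ∈ Af i else ∀ i, η ∈ Af i) := by
  intro η
  have hfinC := comb_chain_fin hcode
  have hIioC := (comb_code hκ hmkι b hcode).2.2.2.1
  have hwfC := wf_gt_of_fin hfinC
  have hwf : ∀ i, WellFounded (fun a b : Tf i => b < a) :=
    fun i => wf_gt_of_fin (bscode_fin (hcode i))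
  have hAf : ∀ i, Af i = Bset (uf i) (ff i) (hwf i) (rt i) := by
    intro i
    ext η'
    rw [hA i η', coded_iff (bscode_fin (hcode i)) ((hcode i).2.2.2.1) (hwf i) (hrt i) η']
  rw [coded_iff hfinC hIioC hwfC (r := (⊥ : WithBot (Σ i, Tf i))) (fun z => bot_le) η]
  rcases isEmpty_or_nonempty ι with hι | hι
  · rw [comb_Bset_bot_empty b hwfC rt hι]
    have hb : b = false := by
      cases b
      · rfl
      · exact absurd (hbι rfl) (not_nonempty_iff.2 hι)
    subst hb
    simp only [Bool.false_eq_true, if_false]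
    exact iff_of_true trivial (fun i => (hι.false i).elim)
  · rw [comb_Bset_bot_nonempty hcode b hwfC hwf rt hrt hι]
    by_cases hb : b = true
    · rw [if_pos hb, if_pos hb, Set.mem_iUnion]
      exact exists_congr (fun i => by rw [hAf i])
    · rw [if_neg hb, if_neg hb, Set.mem_iInter]
      exact forall_congr' (fun i => by rw [hAf i])

end Comb3
lemma base_code (hκ : ℵ₀ ≤ κ) {N : Set (GBS κ)} (hN : N ∈ GBaireBasic κ) :
    BSCode κ ℵ₀ (Fin 1) (fun _ => true) (fun _ : Fin 1 => N) ∧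
      ∀ η, η ∈ N ↔ ∃ s, IIWinsBStar κ (fun _ => true) s (fun _ : Fin 1 => N) η := by
  have hfin : ∀ c : Set (Fin 1), IsChain (· ≤ ·) c → c.Finite :=
    fun c _ => Set.toFinite c
  have hIio : ∀ w : Fin 1, IsChain (· ≤ ·) (Set.Iio w) :=
    fun x => Set.Subsingleton.isChain (Set.subsingleton_of_subsingleton)
  constructor
  · refine ⟨?_, ?_, ?_, hIio, ?_, ⟨0, fun x => ?_⟩, fun _ _ => hN⟩
    · simpa using (Cardinal.one_lt_aleph0.le.trans hκ)
    · exact fun c hc => (Set.toFinite c).lt_aleph0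
    · exact Finite.to_wellFoundedLT
    · exact fun c hc hcne => ⟨0, fun z hz => le_of_eq (Subsingleton.elim _ _),
        fun w hw => le_of_eq (Subsingleton.elim _ _)⟩
    · exact le_of_eq (Subsingleton.elim _ _)
  · intro η
    have hwf := wf_gt_of_fin hfin
    have hleaf : IsLeaf (0 : Fin 1) := by
      rintro ⟨y, hy⟩
      exact absurd (Subsingleton.elim (0 : Fin 1) y) hy.ne
    rw [coded_iff hfin hIio hwf (r := 0) (fun z => le_of_eq (Subsingleton.elim _ _)) η,
      Bset_eq, if_pos hleaf]

lemma isBorelStar_basic' (hκ : ℵ₀ ≤ κ) {N : Set (GBS κ)} (hN : N ∈ GBaireBasic κ) :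
    IsBorelStar κ ℵ₀ N :=
  ⟨Fin 1, inferInstance, fun _ => true, fun _ => N,
    (base_code hκ hN).1, (base_code hκ hN).2⟩

lemma isBorelStar_empty (hκ : ℵ₀ ≤ κ) : IsBorelStar κ ℵ₀ (∅ : Set (GBS κ)) := by
  obtain ⟨N₀, N₁, h0, h1, hdisj⟩ := exists_disjoint_basics hκ
  set Af : Bool → Set (GBS κ) := fun j => bif j then N₁ else N₀ with hAf
  have hbasic : ∀ j, Af j ∈ GBaireBasic κ := by
    intro j; cases j
    · exact h0
    · exact h1
  have hcode : ∀ j : Bool, BSCode κ ℵ₀ (Fin 1) (fun _ => true) (fun _ : Fin 1 => Af j) :=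
    fun j => (base_code hκ (hbasic j)).1
  have hmain := comb_main (Tf := fun _ : Bool => Fin 1) hκ
    (by simpa using (Cardinal.nat_lt_aleph0 2).le.trans hκ) false hcode
    (fun _ => 0) (fun j x => le_of_eq (Subsingleton.elim _ _))
    (fun h => by simp at h) Af (fun j => (base_code hκ (hbasic j)).2)
  refine ⟨WithBot (Σ _ : Bool, Fin 1), inferInstance, cu false (fun _ _ => true),
    cfn Set.univ (fun j (_ : Fin 1) => Af j),
    comb_code hκ (by simpa using (Cardinal.nat_lt_aleph0 2).le.trans hκ) false hcode,
    fun η => ?_⟩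
  rw [hmain η]
  simp only [Bool.false_eq_true, if_false]
  constructor
  · intro h
    exact h.elim
  · intro hall
    have : η ∈ N₀ ∩ N₁ := ⟨hall false, hall true⟩
    rw [hdisj] at this
    exact this.elim

lemma isBorelStar_comb {ι : Type} (hκ : ℵ₀ ≤ κ) (hmkι : Cardinal.mk ι ≤ κ) (b : Bool)
    (A : ι → Set (GBS κ)) (hA : ∀ i, IsBorelStar κ ℵ₀ (A i))
    (hbι : b = true → Nonempty ι) :
    IsBorelStar κ ℵ₀ (if b = true then ⋃ i, A i else ⋂ i, A i) := by
  choose Tf instTf uf ff haux using hA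
  letI : ∀ i, PartialOrder (Tf i) := instTf
  have hcode : ∀ i, BSCode κ ℵ₀ (Tf i) (uf i) (ff i) := fun i => (haux i).1
  choose rt hrt using fun i => (hcode i).2.2.2.2.2.1
  have hmain := comb_main hκ hmkι b hcode rt hrt hbι A (fun i => (haux i).2)
  refine ⟨WithBot (Σ i, Tf i), inferInstance, cu b uf, cfn Set.univ ff,
    comb_code hκ hmkι b hcode, fun η => ?_⟩
  rw [hmain η]
  by_cases hb : b = true
  · rw [if_pos hb, if_pos hb, Set.mem_iUnion]
  · rw [if_neg hb, if_neg hb, Set.mem_iInter]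

end BS16

/-- `Borel(κ) = Borel*_ω(κ)`: a set is `Borel(κ)` iff it has a well-founded
`Borel*`-code (one whose tree has no infinite chains). -/
theorem stmt_16 (κ : Cardinal) (hκ : ℵ₀ ≤ κ) (h : κ ^< κ = κ)
    (X : Set (GBS κ)) :
    GBBorel κ X ↔ IsBorelStar κ ℵ₀ X := by
  constructor
  · intro hB
    induction hB with
    | basic N hN => exact BS16.isBorelStar_basic' hκ hN
    | iUnion ι A hmk hrec IH =>
      rcases isEmpty_or_nonempty ι with hι | hι
      · haveI := hι
        rw [Set.iUnion_of_empty]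
        exact BS16.isBorelStar_empty hκ
      · have := BS16.isBorelStar_comb hκ hmk true A IH (fun _ => hι)
        rwa [if_pos rfl] at this
    | iInter ι A hmk hrec IH =>
      have := BS16.isBorelStar_comb hκ hmk false A IH (fun hc => by simp at hc)
      rwa [if_neg (by simp)] at this
  · rintro ⟨T, instT, u, f, hcode, hX⟩
    letI := instT
    have hfin := BS16.bscode_fin hcode
    have hIio := hcode.2.2.2.1
    have hwf := BS16.wf_gt_of_fin hfin
    obtain ⟨r, hr⟩ := hcode.2.2.2.2.2.1
    have hXeq : X = BS16.Bset u f hwf r := by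
      ext η
      rw [hX η, BS16.coded_iff hfin hIio hwf hr η]
    rw [hXeq]
    exact BS16.gbBorel_Bset hwf hcode.1 hcode.2.2.2.2.2.2 r
end
end

section
/- Assume κ^{<κ} = κ. Every Borel*(κ) subset of κ^κ is Σ¹₁(κ). -/
open Cardinal Ordinal Set Topology
noncomputable section

section AuxStmt17

variable {κ : Cardinal}

/-- `κ^{<κ} = κ` implies `κ` is regular. -/
lemma gb_regular (hκ : ℵ₀ ≤ κ) (h : κ ^< κ = κ) : κ.ord.cof = κ := by
  refine le_antisymm (Ordinal.cof_ord_le κ) ?_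
  by_contra hlt
  push_neg at hlt
  have h1 : κ < κ ^ κ.ord.cof := Cardinal.lt_power_cof hκ
  have h2 : κ ^ κ.ord.cof ≤ κ ^< κ := Cardinal.le_powerlt κ hlt
  rw [h] at h2
  exact absurd (h1.trans_le h2) (lt_irrefl κ)

/-- Any family of fewer than `κ` elements of `κ.ord.ToType` is bounded. -/
lemma gb_bound (hκ : ℵ₀ ≤ κ) (h : κ ^< κ = κ) {ι : Type} (g : ι → κ.ord.ToType)
    (hι : #ι < κ) : ∃ b : κ.ord.ToType, ∀ i, g i < b := by
  set E := Ordinal.ToType.mk (o := κ.ord) with hE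
  set g' : ι → Ordinal := fun i => (E.symm (g i)).1 with hg'
  have hlt : ∀ i, g' i < κ.ord := fun i => (E.symm (g i)).2
  have hsup : iSup g' < κ.ord :=
    Ordinal.iSup_lt_ord (by rwa [gb_regular hκ h]) hlt
  have hsup1 : iSup g' + 1 < κ.ord := by
    have := (Cardinal.isSuccLimit_ord hκ).succ_lt hsup
    rwa [Ordinal.add_one_eq_succ]
  refine ⟨E ⟨iSup g' + 1, hsup1⟩, fun i => ?_⟩
  have h0 : ((E.symm (g i) : Set.Iio κ.ord) : Ordinal) < iSup g' + 1 :=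
    (Ordinal.le_iSup g' i).trans_lt
      (by rw [Ordinal.add_one_eq_succ]; exact Order.lt_succ _)
  have h1 : E.symm (g i) < (⟨iSup g' + 1, hsup1⟩ : Set.Iio κ.ord) :=
    Subtype.coe_lt_coe.mp h0
  have h2 := E.strictMono h1
  rwa [OrderIso.apply_symm_apply] at h2

open Classical in
/-- Decoding a value of `κ.ord.ToType` as an element of `T` via `e`. -/
def decAt {T : Type} (e : T ↪ κ.ord.ToType) (v : κ.ord.ToType) (x : T) : T :=
  if h : ∃ y, v = e y then h.choose else x

lemma decAt_apply {T : Type} (e : T ↪ κ.ord.ToType) (y x : T) :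
    decAt e (e y) x = y := by
  classical
  have h : ∃ z, (e y : κ.ord.ToType) = e z := ⟨y, rfl⟩
  rw [decAt]
  rw [dif_pos h]
  exact (e.injective h.choose_spec).symm

/-- Decoding an element of `κ^κ` as a strategy on `T`. -/
def decode {T : Type} (e : T ↪ κ.ord.ToType) (σ : GBS κ) (x : T) : T :=
  decAt e (σ (e x)) x

lemma decode_congr {T : Type} (e : T ↪ κ.ord.ToType) {σ σ' : GBS κ} {x : T}
    (hx : σ (e x) = σ' (e x)) : decode e σ x = decode e σ' x := by
  unfold decode
  rw [hx]

lemma exists_code {T : Type} (e : T ↪ κ.ord.ToType) (s : T → T) :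
    ∃ σ : GBS κ, decode e σ = s := by
  classical
  refine ⟨fun i => if h : ∃ x, i = e x then e (s h.choose) else i, funext fun x => ?_⟩
  have h : ∃ x', (e x : κ.ord.ToType) = e x' := ⟨x, rfl⟩
  show decAt e (if h : ∃ x', (e x : κ.ord.ToType) = e x' then e (s h.choose) else e x) x = s x
  rw [dif_pos h, show h.choose = x from (e.injective h.choose_spec).symm, decAt_apply]

lemma isPlay_congr {T : Type} [PartialOrder T] {u : T → Bool} {s s' : T → T} {P : Set T}
    (hss : ∀ x ∈ P, s x = s' x) (hP : IsPlay u s P) : IsPlay u s' P := by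
  obtain ⟨h1, h2, h3, h4⟩ := hP
  refine ⟨h1, h2, fun x hx y hy hxy hint => ?_, h4⟩
  obtain ⟨hc, hu⟩ := h3 x hx y hy hxy hint
  exact ⟨hc, fun hux => by rw [← hss x hx]; exact hu hux⟩

end AuxStmt17

/-- Every `Borel*(κ)` subset of `κ^κ` is `Σ¹₁(κ)`. -/
theorem stmt_17 (κ : Cardinal) (hκ : ℵ₀ ≤ κ) (h : κ ^< κ = κ)
    (X : Set (GBS κ)) (hX : IsBorelStar κ κ X) :
    IsSigma11 κ X := by
  obtain ⟨T, inst, u, f, ⟨hT, hchain, hwf, hlin, hlub, hroot, hleaf⟩, hmem⟩ := hX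
  have hTle : #T ≤ #(κ.ord.ToType) := by rwa [Cardinal.mk_ord_toType]
  obtain ⟨e⟩ := (Cardinal.le_def T κ.ord.ToType).mp hTle
  letI := gbTop κ
  have hbasic : ∀ (b : κ.ord.ToType) (η0 : GBS κ),
      IsOpen {g : GBS κ | ∀ i, i < b → g i = η0 i} := fun b η0 =>
    TopologicalSpace.isOpen_generateFrom_of_mem ⟨b, η0, rfl⟩
  refine ⟨{p : GBS κ × GBS κ | IIWinsBStar κ u (decode e p.2) f p.1}, ?_, ?_⟩
  · rw [← isOpen_compl_iff, isOpen_iff_forall_mem_open]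
    rintro ⟨η, σ⟩ hp
    have hp' : ¬ IIWinsBStar κ u (decode e σ) f η := hp
    rw [IIWinsBStar] at hp'
    rcases not_and_or.mp hp' with hnv | hnw
    · -- the decoded strategy is not even valid
      rw [ValidStrat] at hnv
      push_neg at hnv
      obtain ⟨x, hx1, hx2, hx3⟩ := hnv
      obtain ⟨b, hb⟩ := gb_bound hκ h (fun _ : Unit => e x)
        ((by simp : #Unit < ℵ₀).trans_le hκ)
      refine ⟨Set.univ ×ˢ {σ' : GBS κ | ∀ i, i < b → σ' i = σ i}, ?_, ?_, ?_⟩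
      · rintro ⟨η', σ'⟩ ⟨-, hσ'⟩ hC
        have hagree : decode e σ' x = decode e σ x :=
          decode_congr e (hσ' (e x) (hb ()))
        exact hx3 (hagree ▸ hC.1 x hx1 hx2)
      · exact isOpen_univ.prod (hbasic b σ)
      · exact ⟨trivial, fun i _ => rfl⟩
    · -- there is a losing play
      push_neg at hnw
      obtain ⟨P, hP, x, hxP, hlx, hηfx⟩ := hnw
      obtain ⟨b₀, η₀, hfx⟩ := hleaf x hlx
      rw [hfx, Set.mem_setOf_eq] at hηfx
      push_neg at hηfx
      obtain ⟨i₀, hi₀, hne⟩ := hηfx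
      have hPκ : #(↥P) < κ := hchain P hP.1
      obtain ⟨b₁, hb₁⟩ := gb_bound hκ h (fun y : ↥P => e y.1) hPκ
      refine ⟨{η' : GBS κ | ∀ i, i < b₀ → η' i = η i} ×ˢ
        {σ' : GBS κ | ∀ i, i < b₁ → σ' i = σ i}, ?_, ?_, ?_⟩
      · rintro ⟨η', σ'⟩ ⟨hη', hσ'⟩ hC
        have hagree : ∀ y ∈ P, decode e σ y = decode e σ' y := fun y hy =>
          (decode_congr e (hσ' (e y) (hb₁ ⟨y, hy⟩))).symm
        have hP' : IsPlay u (decode e σ') P := isPlay_congr hagree hP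
        have hmemf : η' ∈ f x := hC.2 P hP' x hxP hlx
        rw [hfx] at hmemf
        exact hne (by rw [← hη' i₀ hi₀]; exact hmemf i₀ hi₀)
      · exact (hbasic b₀ η).prod (hbasic b₁ σ)
      · exact ⟨fun i _ => rfl, fun i _ => rfl⟩
  · ext η
    rw [hmem η]
    constructor
    · rintro ⟨s, hs⟩
      obtain ⟨σ, hσ⟩ := exists_code e s
      exact ⟨(η, σ), by rw [Set.mem_setOf_eq, hσ]; exact hs, rfl⟩
    · rintro ⟨⟨η', σ⟩, hC, rfl⟩
      exact ⟨decode e σ, hC⟩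
end
end
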